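/- arXiv:2107.05040 — 8 statements merged into one kernel-verified Lean document; each statement's English description precedes it below -/
import Mathlib

section
/- Let d ≥ 1, let A be a symmetric positive semidefinite d×d real matrix, let f(x) = (1/2)⟨x, A x⟩, and let X : (0,∞) → ℝ^d be a twice continuously differentiable solution of Nesterov's ODE with vanishing damping, Ẍ(t) + (3/t)Ẋ(t) + A X(t) = 0. Then for every t₁ > 0 there exists T > 0 such that for every t₂ with t₁ < t₂ ≤ t₁ + T and every continuously differentiable curve Y : [t₁,t₂] → ℝ^d with Y(t₁) = X(t₁) and Y(t₂) = X(t₂), one has J[Y] ≥ J[X], where J[Y] = ∫_{t₁}^{t₂} t³( (1/2)‖Ẏ(t)‖² − f(Y(t)) ) dt. -/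
open scoped RealInnerProductSpace
open Set

variable {E : Type*} [NormedAddCommGroup E] [InnerProductSpace ℝ E]

lemma nesterov_expand (L : E →ₗ[ℝ] E) (hsym : ∀ x y : E, ⟪L x, y⟫ = ⟪x, L y⟫) (a b u v : E) (c : ℝ) :
    c * ((1/2) * ‖a + u‖^2 - (1/2) * ⟪b + v, L (b + v)⟫) -
      c * ((1/2) * ‖a‖^2 - (1/2) * ⟪b, L b⟫)
    = c * (⟪a, u⟫ - ⟪v, L b⟫) + c * ((1/2) * ‖u‖^2 - (1/2) * ⟪v, L v⟫) := by
  have h1 : ‖a + u‖^2 = ‖a‖^2 + 2 * ⟪a, u⟫ + ‖u‖^2 := norm_add_sq_real a u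
  have h2 : ⟪b + v, L (b + v)⟫ = ⟪b, L b⟫ + 2 * ⟪v, L b⟫ + ⟪v, L v⟫ := by
    have hbv : ⟪b, L v⟫ = ⟪v, L b⟫ := by rw [← hsym b v, real_inner_comm]
    rw [map_add, inner_add_left, inner_add_right, inner_add_right, hbv]
    ring
  rw [h1, h2]; ring

lemma nesterov_cs (a b : ℝ) (hab : a ≤ b) (g : ℝ → ℝ) (hg : ContinuousOn g (Icc a b))
    (hgnn : ∀ t ∈ Icc a b, 0 ≤ g t) :
    (∫ t in a..b, g t) ^ 2 ≤ (b - a) * ∫ t in a..b, g t ^ 2 := by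
  set M := ∫ t in a..b, g t with hM
  set Q := ∫ t in a..b, g t ^ 2 with hQ
  have huIcc : uIcc a b = Icc a b := uIcc_of_le hab
  have hgi : IntervalIntegrable g MeasureTheory.volume a b :=
    (hg.mono huIcc.subset).intervalIntegrable
  have hg2i : IntervalIntegrable (fun t => g t ^ 2) MeasureTheory.volume a b :=
    ((hg.pow 2).mono huIcc.subset).intervalIntegrable
  have hMnn : 0 ≤ M := intervalIntegral.integral_nonneg hab fun t ht => hgnn t ht
  have hQnn : 0 ≤ Q := intervalIntegral.integral_nonneg hab fun t ht => sq_nonneg _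
  have key : ∀ ε : ℝ, 0 < ε → M ≤ ((1/2) * ε) * (b - a) + (1/(2*ε)) * Q := by
    intro ε hε
    have hpt : ∀ t ∈ Icc a b, g t ≤ (1/2) * ε + (1/(2*ε)) * g t ^ 2 := by
      intro t ht
      have h0 := sq_nonneg (g t - ε)
      have hne : ε ≠ 0 := ne_of_gt hε
      rw [← sub_nonneg]
      have heq : (1/2) * ε + (1/(2*ε)) * g t ^ 2 - g t = (g t - ε)^2 / (2*ε) := by
        field_simp; ring
      rw [heq]
      positivity
    calc M ≤ ∫ t in a..b, ((1/2) * ε + (1/(2*ε)) * g t ^ 2) := by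
            apply intervalIntegral.integral_mono_on hab hgi _ hpt
            exact (intervalIntegrable_const).add (hg2i.const_mul _)
      _ = ((1/2) * ε) * (b - a) + (1/(2*ε)) * Q := by
            rw [intervalIntegral.integral_add intervalIntegrable_const (hg2i.const_mul _),
              intervalIntegral.integral_const, intervalIntegral.integral_const_mul]
            simp [smul_eq_mul, mul_comm]
            exact Or.inl hQ.symm
  rcases eq_or_lt_of_le hQnn with hQ0 | hQpos
  · have hM0 : M ≤ 0 := by
      rcases eq_or_lt_of_le hab with rfl | hlt
      · simp [hM]
      · refine le_of_forall_pos_le_add fun δ hδ => ?_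
        have hba : (0:ℝ) < b - a := by linarith
        have := key (2 * δ / (b - a)) (by positivity)
        rw [← hQ0] at this
        calc M ≤ (1/2) * (2 * δ / (b - a)) * (b - a) + 1/(2*(2 * δ / (b - a))) * 0 := this
          _ = δ := by field_simp; ring
          _ ≤ 0 + δ := by linarith
    have : M = 0 := le_antisymm hM0 hMnn
    rw [this, ← hQ0]; ring_nf; positivity
  · rcases eq_or_lt_of_le hab with rfl | hlt
    · simp [hM]
    · have hba : (0:ℝ) < b - a := by linarith
      set ε := Real.sqrt (Q / (b - a)) with hε
      have hεpos : 0 < ε := Real.sqrt_pos.mpr (by positivity)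
      have hε2 : ε ^ 2 = Q / (b - a) := Real.sq_sqrt (by positivity)
      have hεQ : ε * ε * (b - a) = Q := by
        have : ε ^ 2 * (b - a) = Q := by rw [hε2]; field_simp
        nlinarith
      have hMε := key ε hεpos
      have hQε : (1/(2*ε)) * Q = (1/2) * ε * (b - a) := by
        field_simp
        nlinarith
      rw [hQε] at hMε
      have hMle : M ≤ ε * (b - a) := by linarith
      calc M ^ 2 ≤ (ε * (b - a)) ^ 2 := by nlinarith
        _ = (b - a) * Q := by nlinarith

/-- The action functional with vanishing damping `3/t` on `[t₁, t₂]` for the quadratic loss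
`f(x) = (1/2)⟨x, A x⟩`, evaluated on a curve `Y` with derivative `Y'`. -/
noncomputable def nesterovAction (d : ℕ) (A : Matrix (Fin d) (Fin d) ℝ) (t₁ t₂ : ℝ)
    (Y Y' : ℝ → EuclideanSpace ℝ (Fin d)) : ℝ :=
  ∫ t in t₁..t₂, t ^ 3 *
    ((1 / 2) * ‖Y' t‖ ^ 2 - (1 / 2) * ⟪Y t, Matrix.toEuclideanLin A (Y t)⟫)

set_option maxHeartbeats 1000000 in
/-- **Local optimality of Nesterov with vanishing damping.**  If `X` is a twice continuously
differentiable solution of `Ẍ + (3/t)Ẋ + A X = 0` on `(0, ∞)` with `A` symmetric positive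
semidefinite, then for every `t₁ > 0` there is `T > 0` such that on every interval `[t₁, t₂]`
with `t₁ < t₂ ≤ t₁ + T`, Nesterov's path minimizes the action among all `C¹` curves with the
same endpoints. -/
theorem nesterov_vanishing_damping_local_minimality
    (d : ℕ) (hd : 1 ≤ d) (A : Matrix (Fin d) (Fin d) ℝ) (hA : A.PosSemidef)
    (X X' X'' : ℝ → EuclideanSpace ℝ (Fin d))
    (hX : ∀ t ∈ Ioi (0 : ℝ), HasDerivAt X (X' t) t)
    (hX' : ∀ t ∈ Ioi (0 : ℝ), HasDerivAt X' (X'' t) t)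
    (hX'' : ContinuousOn X'' (Ioi (0 : ℝ)))
    (hODE : ∀ t ∈ Ioi (0 : ℝ),
      X'' t + (3 / t) • X' t + Matrix.toEuclideanLin A (X t) = 0) :
    ∀ t₁ > (0 : ℝ), ∃ T > (0 : ℝ), ∀ t₂, t₁ < t₂ → t₂ ≤ t₁ + T →
      ∀ Y Y' : ℝ → EuclideanSpace ℝ (Fin d),
        (∀ t ∈ Icc t₁ t₂, HasDerivWithinAt Y (Y' t) (Icc t₁ t₂) t) →
        ContinuousOn Y' (Icc t₁ t₂) →
        Y t₁ = X t₁ → Y t₂ = X t₂ →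
        nesterovAction d A t₁ t₂ Y Y' ≥ nesterovAction d A t₁ t₂ X X' := by
  intro t₁ ht₁
  set L : EuclideanSpace ℝ (Fin d) →ₗ[ℝ] EuclideanSpace ℝ (Fin d) := Matrix.toEuclideanLin A
    with hLdef
  have hsym : ∀ x y : EuclideanSpace ℝ (Fin d), ⟪L x, y⟫ = ⟪x, L y⟫ :=
    Matrix.isHermitian_iff_isSymmetric.mp hA.1
  set Lc : EuclideanSpace ℝ (Fin d) →L[ℝ] EuclideanSpace ℝ (Fin d) :=
    LinearMap.toContinuousLinearMap L with hLc
  have hLcont : Continuous fun x => L x := Lc.continuous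
  set C : ℝ := ‖Lc‖ + 1 with hCdef
  have hCpos : 0 < C := by positivity
  have hLbound : ∀ x : EuclideanSpace ℝ (Fin d), ‖L x‖ ≤ C * ‖x‖ := by
    intro x
    have h1 : ‖Lc x‖ ≤ ‖Lc‖ * ‖x‖ := Lc.le_opNorm x
    have h2 : Lc x = L x := rfl
    rw [h2] at h1
    nlinarith [norm_nonneg x]
  set B : ℝ := t₁ + 1 with hBdef
  have hBpos : 0 < B := by positivity
  refine ⟨min 1 (t₁ ^ 3 / (C * B ^ 3)), lt_min one_pos (by positivity), ?_⟩
  intro t₂ h12 h2T Y Y' hY hY'c hYa hYb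
  set T : ℝ := min 1 (t₁ ^ 3 / (C * B ^ 3)) with hTdef
  have ht12 : t₁ ≤ t₂ := le_of_lt h12
  have huIcc : uIcc t₁ t₂ = Icc t₁ t₂ := uIcc_of_le ht12
  have hsub : Icc t₁ t₂ ⊆ Ioi (0 : ℝ) := fun t ht => lt_of_lt_of_le ht₁ ht.1
  -- basic continuity facts
  have hXc : ContinuousOn X (Icc t₁ t₂) := fun t ht =>
    ((hX t (hsub ht)).continuousAt).continuousWithinAt
  have hX'c : ContinuousOn X' (Icc t₁ t₂) := fun t ht =>
    ((hX' t (hsub ht)).continuousAt).continuousWithinAt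
  have hYc : ContinuousOn Y (Icc t₁ t₂) := fun t ht => (hY t ht).continuousWithinAt
  -- the difference curve
  set h : ℝ → EuclideanSpace ℝ (Fin d) := fun t => Y t - X t with hhdef
  set h' : ℝ → EuclideanSpace ℝ (Fin d) := fun t => Y' t - X' t with hh'def
  have hh : ∀ t ∈ Icc t₁ t₂, HasDerivWithinAt h (h' t) (Icc t₁ t₂) t := fun t ht =>
    (hY t ht).sub ((hX t (hsub ht)).hasDerivWithinAt)
  have hhc : ContinuousOn h (Icc t₁ t₂) := hYc.sub hXc
  have hh'c : ContinuousOn h' (Icc t₁ t₂) := hY'c.sub hX'c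
  have hh1 : h t₁ = 0 := by simp [hhdef, hYa]
  have hh2 : h t₂ = 0 := by simp [hhdef, hYb]
  have hhderiv : ∀ t ∈ Ioo t₁ t₂, HasDerivAt h (h' t) t := by
    intro t ht
    exact (hh t (Ioo_subset_Icc_self ht)).hasDerivAt (Icc_mem_nhds ht.1 ht.2)
  -- integrand pieces
  set G : ℝ → ℝ := fun t => t ^ 3 * (⟪X' t, h' t⟫ - ⟪h t, L (X t)⟫) with hGdef
  set Efn : ℝ → ℝ := fun t =>
    t ^ 3 * ((1/2) * ‖h' t‖ ^ 2 - (1/2) * ⟪h t, L (h t)⟫) with hEdef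
  have hGc : ContinuousOn G (Icc t₁ t₂) := by
    apply ContinuousOn.mul (by fun_prop)
    exact ((hX'c.inner hh'c).sub (hhc.inner (hLcont.comp_continuousOn hXc)))
  have hEc : ContinuousOn Efn (Icc t₁ t₂) := by
    apply ContinuousOn.mul (by fun_prop)
    apply ContinuousOn.sub
    · exact (continuousOn_const.mul ((hh'c.norm).pow 2))
    · exact (continuousOn_const.mul (hhc.inner (hLcont.comp_continuousOn hhc)))
  -- step 1 : ∫ G = 0
  have hGzero : (∫ t in t₁..t₂, G t) = 0 := by
    set g : ℝ → ℝ := fun t => t ^ 3 * ⟪X' t, h t⟫ with hgdef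
    have hgc : ContinuousOn g (Icc t₁ t₂) :=
      ((continuous_pow 3).continuousOn).mul (hX'c.inner hhc)
    have hgd : ∀ t ∈ Ioo t₁ t₂, HasDerivWithinAt g (G t) (Ioi t) t := by
      intro t ht
      have htpos : (0:ℝ) < t := lt_trans ht₁ ht.1
      have htne : t ≠ 0 := ne_of_gt htpos
      have htmem : t ∈ Icc t₁ t₂ := Ioo_subset_Icc_self ht
      have hd1 : HasDerivAt (fun s : ℝ => s ^ 3) (3 * t ^ 2) t := by
        simpa using hasDerivAt_pow 3 t
      have hd2 : HasDerivAt (fun s => ⟪X' s, h s⟫)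
          (⟪X' t, h' t⟫ + ⟪X'' t, h t⟫) t :=
        (hX' t (hsub htmem)).inner ℝ (hhderiv t ht)
      have hd : HasDerivAt g
          (3 * t ^ 2 * ⟪X' t, h t⟫ + t ^ 3 * (⟪X' t, h' t⟫ + ⟪X'' t, h t⟫)) t := hd1.mul hd2
      have hODEt := hODE t (hsub htmem)
      rw [add_assoc] at hODEt
      have hX''eq : X'' t = -((3 / t) • X' t + L (X t)) :=
        eq_neg_of_add_eq_zero_left hODEt
      have hinner : ⟪X'' t, h t⟫ = -((3 / t) * ⟪X' t, h t⟫ + ⟪h t, L (X t)⟫) := by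
        rw [hX''eq, inner_neg_left, inner_add_left, real_inner_smul_left,
          real_inner_comm (L (X t)) (h t)]
      have hval : 3 * t ^ 2 * ⟪X' t, h t⟫ + t ^ 3 * (⟪X' t, h' t⟫ + ⟪X'' t, h t⟫) = G t := by
        rw [hinner, hGdef]
        field_simp
        ring
      rw [← hval]
      exact hd.hasDerivWithinAt
    have hGint : IntervalIntegrable G MeasureTheory.volume t₁ t₂ :=
      (hGc.mono huIcc.subset).intervalIntegrable
    have hFTC := intervalIntegral.integral_eq_sub_of_hasDeriv_right_of_le ht12 hgc hgd hGint
    rw [hFTC, hgdef]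
    simp [hh1, hh2]
  -- step 2 : ∫ E ≥ 0
  have hΔT : t₂ - t₁ ≤ T := by linarith
  have hT1 : T ≤ 1 := min_le_left _ _
  have hT2 : T ≤ t₁ ^ 3 / (C * B ^ 3) := min_le_right _ _
  have hΔpos : 0 < t₂ - t₁ := by linarith
  have hEnonneg : 0 ≤ ∫ t in t₁..t₂, Efn t := by
    set Q : ℝ := ∫ t in t₁..t₂, ‖h' t‖ ^ 2 with hQdef
    set M : ℝ := ∫ t in t₁..t₂, ‖h' t‖ with hMdef
    have hn'c : ContinuousOn (fun t => ‖h' t‖) (Icc t₁ t₂) := hh'c.norm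
    have hQnn : 0 ≤ Q := intervalIntegral.integral_nonneg ht12 fun t ht => sq_nonneg _
    have hMnn : 0 ≤ M := intervalIntegral.integral_nonneg ht12 fun t ht => norm_nonneg _
    have hM2 : M ^ 2 ≤ (t₂ - t₁) * Q :=
      nesterov_cs t₁ t₂ ht12 _ hn'c fun t ht => norm_nonneg _
    -- pointwise bound on ‖h t‖
    have hhb : ∀ t ∈ Icc t₁ t₂, ‖h t‖ ≤ M := by
      intro t ht
      have hsub2 : Icc t₁ t ⊆ Icc t₁ t₂ := Icc_subset_Icc le_rfl ht.2
      have hint : IntervalIntegrable h' MeasureTheory.volume t₁ t :=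
        ((hh'c.mono hsub2).mono (uIcc_of_le ht.1).subset).intervalIntegrable
      have hFTC : (∫ s in t₁..t, h' s) = h t - h t₁ := by
        apply intervalIntegral.integral_eq_sub_of_hasDeriv_right_of_le ht.1
          (hhc.mono hsub2) _ hint
        intro x hx
        exact (hhderiv x ⟨hx.1, lt_of_lt_of_le hx.2 ht.2⟩).hasDerivWithinAt
      rw [hh1, sub_zero] at hFTC
      calc ‖h t‖ = ‖∫ s in t₁..t, h' s‖ := by rw [hFTC]
        _ ≤ ∫ s in t₁..t, ‖h' s‖ := intervalIntegral.norm_integral_le_integral_norm ht.1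
        _ ≤ M := by
            apply intervalIntegral.integral_mono_interval le_rfl ht.1 ht.2
              (Filter.Eventually.of_forall fun s => norm_nonneg _)
            exact (hn'c.mono huIcc.subset).intervalIntegrable
    have hhb2 : ∀ t ∈ Icc t₁ t₂, ⟪h t, L (h t)⟫ ≤ C * ((t₂ - t₁) * Q) := by
      intro t ht
      have h1 : ⟪h t, L (h t)⟫ ≤ ‖h t‖ * ‖L (h t)‖ := real_inner_le_norm _ _
      have h2 : ‖L (h t)‖ ≤ C * ‖h t‖ := hLbound _
      have h3 : ‖h t‖ ≤ M := hhb t ht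
      have h4 : ‖h t‖ * ‖L (h t)‖ ≤ ‖h t‖ * (C * ‖h t‖) :=
        mul_le_mul_of_nonneg_left h2 (norm_nonneg _)
      have h5 : ‖h t‖ * ‖h t‖ ≤ M * M := mul_le_mul h3 h3 (norm_nonneg _) hMnn
      have h6 : M * M ≤ (t₂ - t₁) * Q := by rw [← pow_two]; exact hM2
      have h7 : ‖h t‖ * (C * ‖h t‖) = C * (‖h t‖ * ‖h t‖) := by ring
      have h8 : C * (‖h t‖ * ‖h t‖) ≤ C * ((t₂ - t₁) * Q) :=
        mul_le_mul_of_nonneg_left (le_trans h5 h6) (le_of_lt hCpos)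
      linarith
    -- split the integral of Efn
    have htB : ∀ t ∈ Icc t₁ t₂, t ≤ B := fun t ht => by
      have := ht.2; rw [hBdef]; linarith
    have hi1 : IntervalIntegrable (fun t => t ^ 3 * ((1/2) * ‖h' t‖ ^ 2))
        MeasureTheory.volume t₁ t₂ := by
      apply ContinuousOn.intervalIntegrable
      apply ContinuousOn.mul ((continuous_pow 3).continuousOn)
      exact (continuousOn_const.mul ((hn'c.pow 2).mono huIcc.subset))
    have hi2 : IntervalIntegrable (fun t => t ^ 3 * ((1/2) * ⟪h t, L (h t)⟫))
        MeasureTheory.volume t₁ t₂ := by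
      apply ContinuousOn.intervalIntegrable
      apply ContinuousOn.mul ((continuous_pow 3).continuousOn)
      exact (continuousOn_const.mul
        ((hhc.inner (hLcont.comp_continuousOn hhc)).mono huIcc.subset))
    have hsplit : (∫ t in t₁..t₂, Efn t) =
        (∫ t in t₁..t₂, t ^ 3 * ((1/2) * ‖h' t‖ ^ 2)) -
          ∫ t in t₁..t₂, t ^ 3 * ((1/2) * ⟪h t, L (h t)⟫) := by
      rw [← intervalIntegral.integral_sub hi1 hi2]
      apply intervalIntegral.integral_congr
      intro t ht
      rw [hEdef]
      ring
    have hlow : t₁ ^ 3 * (1/2) * Q ≤ ∫ t in t₁..t₂, t ^ 3 * ((1/2) * ‖h' t‖ ^ 2) := by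
      have heq : (∫ t in t₁..t₂, t₁ ^ 3 * (1/2) * ‖h' t‖ ^ 2) = t₁ ^ 3 * (1/2) * Q :=
        intervalIntegral.integral_const_mul (t₁ ^ 3 * (1/2)) fun t => ‖h' t‖ ^ 2
      rw [← heq]
      have hi0 : IntervalIntegrable (fun t => t₁ ^ 3 * (1/2) * ‖h' t‖ ^ 2)
          MeasureTheory.volume t₁ t₂ := by
        apply ContinuousOn.intervalIntegrable
        exact (continuousOn_const.mul ((hn'c.pow 2).mono huIcc.subset))
      apply intervalIntegral.integral_mono_on ht12 hi0 hi1
      intro t ht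
      have ht3 : t₁ ^ 3 ≤ t ^ 3 := pow_le_pow_left₀ (le_of_lt ht₁) ht.1 3
      nlinarith [sq_nonneg ‖h' t‖]
    have hup : (∫ t in t₁..t₂, t ^ 3 * ((1/2) * ⟪h t, L (h t)⟫)) ≤
        (t₂ - t₁) * (B ^ 3 * ((1/2) * (C * ((t₂ - t₁) * Q)))) := by
      have heq : (∫ _t in t₁..t₂, B ^ 3 * ((1/2) * (C * ((t₂ - t₁) * Q)))) =
          (t₂ - t₁) * (B ^ 3 * ((1/2) * (C * ((t₂ - t₁) * Q)))) := by
        rw [intervalIntegral.integral_const, smul_eq_mul]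
      rw [← heq]
      apply intervalIntegral.integral_mono_on ht12 hi2 intervalIntegrable_const
      intro t ht
      have htpos : (0:ℝ) < t := lt_of_lt_of_le ht₁ ht.1
      have ht3 : t ^ 3 ≤ B ^ 3 := pow_le_pow_left₀ (le_of_lt htpos) (htB t ht) 3
      have hR : 0 ≤ C * ((t₂ - t₁) * Q) := by positivity
      calc t ^ 3 * ((1/2) * ⟪h t, L (h t)⟫)
          ≤ t ^ 3 * ((1/2) * (C * ((t₂ - t₁) * Q))) := by
            apply mul_le_mul_of_nonneg_left _ (by positivity)
            apply mul_le_mul_of_nonneg_left (hhb2 t ht) (by norm_num)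
        _ ≤ B ^ 3 * ((1/2) * (C * ((t₂ - t₁) * Q))) := by
            apply mul_le_mul_of_nonneg_right ht3 (by positivity)
    -- the smallness of the interval
    have hsmall : C * B ^ 3 * (t₂ - t₁) ^ 2 ≤ t₁ ^ 3 := by
      have hΔ1 : t₂ - t₁ ≤ 1 := le_trans hΔT hT1
      have hΔ2 : t₂ - t₁ ≤ t₁ ^ 3 / (C * B ^ 3) := le_trans hΔT hT2
      have hCB : (0:ℝ) < C * B ^ 3 := by positivity
      have h1 : (t₂ - t₁) ^ 2 ≤ t₁ ^ 3 / (C * B ^ 3) := by nlinarith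
      calc C * B ^ 3 * (t₂ - t₁) ^ 2 ≤ C * B ^ 3 * (t₁ ^ 3 / (C * B ^ 3)) :=
            mul_le_mul_of_nonneg_left h1 (le_of_lt hCB)
        _ = t₁ ^ 3 := by field_simp
    rw [hsplit]
    have hQfinal : (t₂ - t₁) * (B ^ 3 * ((1/2) * (C * ((t₂ - t₁) * Q)))) ≤
        t₁ ^ 3 * (1/2) * Q := by
      have hkey := mul_le_mul_of_nonneg_right hsmall hQnn
      have heq : (t₂ - t₁) * (B ^ 3 * ((1/2) * (C * ((t₂ - t₁) * Q)))) =
          (1/2) * (C * B ^ 3 * (t₂ - t₁) ^ 2 * Q) := by ring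
      have heq2 : t₁ ^ 3 * (1/2) * Q = (1/2) * (t₁ ^ 3 * Q) := by ring
      rw [heq, heq2]
      exact mul_le_mul_of_nonneg_left hkey (by norm_num)
    linarith
  -- step 3 : combine
  have hIY : IntervalIntegrable (fun t => t ^ 3 *
      ((1/2) * ‖Y' t‖ ^ 2 - (1/2) * ⟪Y t, L (Y t)⟫)) MeasureTheory.volume t₁ t₂ := by
    apply ContinuousOn.intervalIntegrable
    apply ContinuousOn.mul ((continuous_pow 3).continuousOn)
    apply ContinuousOn.sub
    · exact (continuousOn_const.mul (((hY'c.norm).pow 2).mono huIcc.subset))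
    · exact (continuousOn_const.mul
        ((hYc.inner (hLcont.comp_continuousOn hYc)).mono huIcc.subset))
  have hIX : IntervalIntegrable (fun t => t ^ 3 *
      ((1/2) * ‖X' t‖ ^ 2 - (1/2) * ⟪X t, L (X t)⟫)) MeasureTheory.volume t₁ t₂ := by
    apply ContinuousOn.intervalIntegrable
    apply ContinuousOn.mul ((continuous_pow 3).continuousOn)
    apply ContinuousOn.sub
    · exact (continuousOn_const.mul (((hX'c.norm).pow 2).mono huIcc.subset))
    · exact (continuousOn_const.mul
        ((hXc.inner (hLcont.comp_continuousOn hXc)).mono huIcc.subset))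
  have hGint : IntervalIntegrable G MeasureTheory.volume t₁ t₂ :=
    (hGc.mono huIcc.subset).intervalIntegrable
  have hEint : IntervalIntegrable Efn MeasureTheory.volume t₁ t₂ :=
    (hEc.mono huIcc.subset).intervalIntegrable
  rw [ge_iff_le, ← sub_nonneg]
  have hdiff : nesterovAction d A t₁ t₂ Y Y' - nesterovAction d A t₁ t₂ X X' =
      (∫ t in t₁..t₂, G t) + ∫ t in t₁..t₂, Efn t := by
    rw [nesterovAction, nesterovAction, ← hLdef,
      ← intervalIntegral.integral_sub hIY hIX, ← intervalIntegral.integral_add hGint hEint]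
    apply intervalIntegral.integral_congr
    intro t ht
    have hYt : Y t = X t + h t := by rw [hhdef]; exact eq_add_of_sub_eq' rfl
    have hY't : Y' t = X' t + h' t := by rw [hh'def]; exact eq_add_of_sub_eq' rfl
    show t ^ 3 * ((1/2) * ‖Y' t‖ ^ 2 - (1/2) * ⟪Y t, L (Y t)⟫) -
        t ^ 3 * ((1/2) * ‖X' t‖ ^ 2 - (1/2) * ⟪X t, L (X t)⟫) = G t + Efn t
    rw [hYt, hY't, hGdef, hEdef]
    exact nesterov_expand L hsym (X' t) (X t) (h' t) (h t) (t ^ 3)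
  rw [hdiff, hGzero, zero_add]
  exact hEnonneg
end

section
/- Let β > 0 and 0 < t₁ < t₂ with t₂ − t₁ > √(40/β). Then the quadratic form Q(h) = ∫_{t₁}^{t₂} t³( ḣ(t)² − β h(t)² ) dt on the space of continuously differentiable functions h : [t₁,t₂] → ℝ with h(t₁) = h(t₂) = 0 is indefinite: there exist admissible h₊ and h₋ with Q(h₊) > 0 and Q(h₋) < 0. -/
open Set

set_option maxHeartbeats 1000000

/-- **Indefiniteness of the second variation** of the action of Nesterov's Lagrangian with
vanishing damping `3/t` on `f(x) = βx²/2`: if `t₂ - t₁ > √(40/β)`, the quadratic form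
`Q(h) = ∫_{t₁}^{t₂} t³(ḣ² - βh²) dt` on admissible perturbations is indefinite. -/
theorem nesterov_vanishing_damping_second_variation_indefinite
    (β t₁ t₂ : ℝ) (hβ : 0 < β) (ht₁ : 0 < t₁) (ht : t₁ < t₂)
    (hgap : t₂ - t₁ > Real.sqrt (40 / β)) :
    ∃ hp hp' hm hm' : ℝ → ℝ,
      (∀ t ∈ Icc t₁ t₂, HasDerivWithinAt hp (hp' t) (Icc t₁ t₂) t) ∧
      ContinuousOn hp' (Icc t₁ t₂) ∧ hp t₁ = 0 ∧ hp t₂ = 0 ∧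
      (∀ t ∈ Icc t₁ t₂, HasDerivWithinAt hm (hm' t) (Icc t₁ t₂) t) ∧
      ContinuousOn hm' (Icc t₁ t₂) ∧ hm t₁ = 0 ∧ hm t₂ = 0 ∧
      (0 < ∫ t in t₁..t₂, t ^ 3 * ((hp' t) ^ 2 - β * (hp t) ^ 2)) ∧
      (∫ t in t₁..t₂, t ^ 3 * ((hm' t) ^ 2 - β * (hm t) ^ 2)) < 0 := by
  have hL : 0 < t₂ - t₁ := sub_pos.2 ht
  have ht₂ : 0 < t₂ := ht₁.trans ht
  have hβL : 40 < β * (t₂ - t₁) ^ 2 := by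
    have h40 : (0:ℝ) ≤ 40 / β := by positivity
    have hs := Real.sq_sqrt h40
    have h2 : 40 / β < (t₂ - t₁) ^ 2 := by
      nlinarith [Real.sqrt_nonneg (40 / β)]
    rw [div_lt_iff₀ hβ] at h2
    nlinarith
  -- choose the frequency ω = Nπ/(t₂-t₁)
  obtain ⟨N, hN⟩ := exists_nat_gt ((t₂ - t₁) * Real.sqrt (β * t₂ ^ 3 / t₁ ^ 3) / Real.pi)
  set ω : ℝ := N * Real.pi / (t₂ - t₁) with hω_def
  have hNpos : (0:ℝ) < N := lt_of_le_of_lt (by positivity) hN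
  have hωpos : 0 < ω := div_pos (mul_pos hNpos Real.pi_pos) hL
  have hsqrt_lt : Real.sqrt (β * t₂ ^ 3 / t₁ ^ 3) < ω := by
    rw [hω_def, lt_div_iff₀ hL]
    have h := (div_lt_iff₀ Real.pi_pos).mp hN
    calc Real.sqrt (β * t₂ ^ 3 / t₁ ^ 3) * (t₂ - t₁)
        = (t₂ - t₁) * Real.sqrt (β * t₂ ^ 3 / t₁ ^ 3) := mul_comm _ _
      _ < N * Real.pi := h
  have hω2 : β * t₂ ^ 3 / t₁ ^ 3 < ω ^ 2 := (Real.sqrt_lt' hωpos).mp hsqrt_lt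
  have hkey : β * t₂ ^ 3 < t₁ ^ 3 * ω ^ 2 := by
    rw [div_lt_iff₀ (by positivity)] at hω2
    nlinarith
  have hωL : ω * t₂ - ω * t₁ = N * Real.pi := by
    rw [hω_def]; field_simp
  refine ⟨fun t => Real.sin (ω * t - ω * t₁), fun t => ω * Real.cos (ω * t - ω * t₁),
    fun t => (t - t₁) * (t₂ - t), fun t => t₁ + t₂ - 2 * t, ?_, ?_, ?_, ?_, ?_, ?_, ?_, ?_, ?_, ?_⟩
  · intro t _
    have h1 : HasDerivAt (fun t : ℝ => ω * t - ω * t₁) ω t := by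
      simpa using ((hasDerivAt_id t).const_mul ω).sub_const (ω * t₁)
    have h2 : HasDerivAt (fun t => Real.sin (ω * t - ω * t₁))
        (ω * Real.cos (ω * t - ω * t₁)) t := by
      simpa [mul_comm] using h1.sin
    exact h2.hasDerivWithinAt
  · exact (by fun_prop : Continuous fun t => ω * Real.cos (ω * t - ω * t₁)).continuousOn
  · simp
  · show Real.sin (ω * t₂ - ω * t₁) = 0
    rw [hωL, Real.sin_nat_mul_pi]
  · intro t _
    have h1 : HasDerivAt (fun t : ℝ => (t - t₁) * (t₂ - t)) (t₁ + t₂ - 2 * t) t := by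
      have h := ((hasDerivAt_id t).sub_const t₁).mul ((hasDerivAt_const t t₂).sub (hasDerivAt_id t))
      refine h.congr_deriv ?_; simp only [Pi.sub_apply, id_eq]; ring
    exact h1.hasDerivWithinAt
  · exact (by fun_prop : Continuous fun t : ℝ => t₁ + t₂ - 2 * t).continuousOn
  · simp
  · simp
  · -- positive integral
    have hfc : Continuous fun t : ℝ =>
        t ^ 3 * ((ω * Real.cos (ω * t - ω * t₁)) ^ 2 - β * (Real.sin (ω * t - ω * t₁)) ^ 2) := by
      fun_prop
    have hgc : Continuous fun t : ℝ =>
        t₁ ^ 3 * ω ^ 2 * Real.cos (ω * t - ω * t₁) ^ 2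
          - t₂ ^ 3 * β * Real.sin (ω * t - ω * t₁) ^ 2 := by
      fun_prop
    have hmono : (∫ t in t₁..t₂,
          (t₁ ^ 3 * ω ^ 2 * Real.cos (ω * t - ω * t₁) ^ 2
            - t₂ ^ 3 * β * Real.sin (ω * t - ω * t₁) ^ 2)) ≤
        ∫ t in t₁..t₂,
          t ^ 3 * ((ω * Real.cos (ω * t - ω * t₁)) ^ 2 - β * (Real.sin (ω * t - ω * t₁)) ^ 2) := by
      refine intervalIntegral.integral_mono_on ht.le (hgc.intervalIntegrable _ _)
        (hfc.intervalIntegrable _ _) ?_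
      intro t htt
      obtain ⟨h1, h2⟩ := htt
      have e1 : 0 ≤ (t ^ 3 - t₁ ^ 3) * (ω ^ 2 * Real.cos (ω * t - ω * t₁) ^ 2) :=
        mul_nonneg (sub_nonneg.2 (pow_le_pow_left₀ ht₁.le h1 3)) (by positivity)
      have e2 : 0 ≤ (t₂ ^ 3 - t ^ 3) * (β * Real.sin (ω * t - ω * t₁) ^ 2) :=
        mul_nonneg (sub_nonneg.2 (pow_le_pow_left₀ (ht₁.le.trans h1) h2 3)) (by positivity)
      nlinarith [e1, e2]
    have hcos : (∫ t in t₁..t₂, Real.cos (ω * t - ω * t₁) ^ 2) = (t₂ - t₁) / 2 := by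
      have h := intervalIntegral.integral_comp_mul_add (a := t₁) (b := t₂)
        (f := fun x => Real.cos x ^ 2) hωpos.ne' (-(ω * t₁))
      simp only [← sub_eq_add_neg, smul_eq_mul] at h
      rw [h, show ω * t₁ - ω * t₁ = 0 by ring, hωL, integral_cos_sq,
        Real.sin_nat_mul_pi, Real.sin_zero, hω_def]
      have hNπ : (N : ℝ) * Real.pi ≠ 0 := by positivity
      field_simp
      ring
    have hsin : (∫ t in t₁..t₂, Real.sin (ω * t - ω * t₁) ^ 2) = (t₂ - t₁) / 2 := by
      have h := intervalIntegral.integral_comp_mul_add (a := t₁) (b := t₂)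
        (f := fun x => Real.sin x ^ 2) hωpos.ne' (-(ω * t₁))
      simp only [← sub_eq_add_neg, smul_eq_mul] at h
      rw [h, show ω * t₁ - ω * t₁ = 0 by ring, hωL, integral_sin_sq,
        Real.sin_nat_mul_pi, Real.sin_zero, hω_def]
      have hNπ : (N : ℝ) * Real.pi ≠ 0 := by positivity
      field_simp
      ring
    have hgval : (∫ t in t₁..t₂,
          (t₁ ^ 3 * ω ^ 2 * Real.cos (ω * t - ω * t₁) ^ 2
            - t₂ ^ 3 * β * Real.sin (ω * t - ω * t₁) ^ 2))
        = (t₁ ^ 3 * ω ^ 2 - t₂ ^ 3 * β) * ((t₂ - t₁) / 2) := by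
      rw [intervalIntegral.integral_sub
        ((by fun_prop : Continuous fun t : ℝ =>
          t₁ ^ 3 * ω ^ 2 * Real.cos (ω * t - ω * t₁) ^ 2).intervalIntegrable _ _)
        ((by fun_prop : Continuous fun t : ℝ =>
          t₂ ^ 3 * β * Real.sin (ω * t - ω * t₁) ^ 2).intervalIntegrable _ _),
        intervalIntegral.integral_const_mul, intervalIntegral.integral_const_mul, hcos, hsin]
      ring
    have hgpos : 0 < (t₁ ^ 3 * ω ^ 2 - t₂ ^ 3 * β) * ((t₂ - t₁) / 2) :=
      mul_pos (by nlinarith) (by linarith)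
    calc (0:ℝ) < (t₁ ^ 3 * ω ^ 2 - t₂ ^ 3 * β) * ((t₂ - t₁) / 2) := hgpos
      _ = ∫ t in t₁..t₂,
          (t₁ ^ 3 * ω ^ 2 * Real.cos (ω * t - ω * t₁) ^ 2
            - t₂ ^ 3 * β * Real.sin (ω * t - ω * t₁) ^ 2) := hgval.symm
      _ ≤ _ := hmono
  · -- negative integral via explicit antiderivative
    have hF : ∀ t : ℝ, HasDerivAt (fun t : ℝ =>
        ((t₁ + t₂) ^ 2 - β * t₁ ^ 2 * t₂ ^ 2) / 4 * t ^ 4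
        + (-4 * (t₁ + t₂) + 2 * β * t₁ * t₂ * (t₁ + t₂)) / 5 * t ^ 5
        + (4 - β * ((t₁ + t₂) ^ 2 + 2 * t₁ * t₂)) / 6 * t ^ 6
        + 2 * β * (t₁ + t₂) / 7 * t ^ 7
        + (-β / 8) * t ^ 8)
        (t ^ 3 * ((t₁ + t₂ - 2 * t) ^ 2 - β * ((t - t₁) * (t₂ - t)) ^ 2)) t := by
      intro t
      have h := (((((hasDerivAt_pow 4 t).const_mul (((t₁ + t₂) ^ 2 - β * t₁ ^ 2 * t₂ ^ 2) / 4)).add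
        ((hasDerivAt_pow 5 t).const_mul ((-4 * (t₁ + t₂) + 2 * β * t₁ * t₂ * (t₁ + t₂)) / 5))).add
        ((hasDerivAt_pow 6 t).const_mul ((4 - β * ((t₁ + t₂) ^ 2 + 2 * t₁ * t₂)) / 6))).add
        ((hasDerivAt_pow 7 t).const_mul (2 * β * (t₁ + t₂) / 7))).add
        ((hasDerivAt_pow 8 t).const_mul (-β / 8))
      refine h.congr_deriv ?_
      push_cast
      ring
    have hcont : Continuous fun t : ℝ =>
        t ^ 3 * ((t₁ + t₂ - 2 * t) ^ 2 - β * ((t - t₁) * (t₂ - t)) ^ 2) := by fun_prop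
    have hval := intervalIntegral.integral_eq_sub_of_hasDerivAt
      (f := fun t : ℝ =>
        ((t₁ + t₂) ^ 2 - β * t₁ ^ 2 * t₂ ^ 2) / 4 * t ^ 4
        + (-4 * (t₁ + t₂) + 2 * β * t₁ * t₂ * (t₁ + t₂)) / 5 * t ^ 5
        + (4 - β * ((t₁ + t₂) ^ 2 + 2 * t₁ * t₂)) / 6 * t ^ 6
        + 2 * β * (t₁ + t₂) / 7 * t ^ 7
        + (-β / 8) * t ^ 8)
      (fun t _ => hF t) (hcont.intervalIntegrable t₁ t₂)
    rw [show (∫ t in t₁..t₂,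
        t ^ 3 * ((t₁ + t₂ - 2 * t) ^ 2 - β * ((t - t₁) * (t₂ - t)) ^ 2)) = _ from hval]
    have hI2 : 0 < (t₂ - t₁) ^ 8 / 168 + t₁ * (t₂ - t₁) ^ 7 / 35 + t₁ ^ 2 * (t₂ - t₁) ^ 6 / 20
        + t₁ ^ 3 * (t₂ - t₁) ^ 5 / 30 := by positivity
    have hterm : 0 < (β * (t₂ - t₁) ^ 2 - 40) *
        ((t₂ - t₁) ^ 8 / 168 + t₁ * (t₂ - t₁) ^ 7 / 35 + t₁ ^ 2 * (t₂ - t₁) ^ 6 / 20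
          + t₁ ^ 3 * (t₂ - t₁) ^ 5 / 30) := mul_pos (by linarith) hI2
    have hD : 0 < 17 / 140 * (t₂ - t₁) ^ 8 + 26 / 35 * t₁ * (t₂ - t₁) ^ 7
        + 3 / 2 * t₁ ^ 2 * (t₂ - t₁) ^ 6 + t₁ ^ 3 * (t₂ - t₁) ^ 5 := by positivity
    have hsq : 0 < (t₂ - t₁) ^ 2 := by positivity
    nlinarith [hterm, hD, hsq]
end

section
/- Let d ≥ 1, let A be a symmetric positive semidefinite d×d real matrix whose largest eigenvalue equals β > 0, let f(x) = (1/2)⟨x, A x⟩, let 0 < t₁ < t₂ with t₂ − t₁ > √(40/β), and let a, b ∈ ℝ^d. Then the action J[Y] = ∫_{t₁}^{t₂} t³( (1/2)‖Ẏ(t)‖² − f(Y(t)) ) dt is unbounded below over the set of continuously differentiable curves Y : [t₁,t₂] → ℝ^d with Y(t₁) = a and Y(t₂) = b: for every M ∈ ℝ there exists such a curve Y with J[Y] < M. -/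
open scoped RealInnerProductSpace
open Set

private lemma hasDerivAt_F1 (s u x : ℝ) :
    HasDerivAt (fun x : ℝ => 2/3*x^6 - 4/5*(s+u)*x^5 + 1/4*(s+u)^2*x^4)
      (x^3*(s+u-2*x)^2) x := by
  have h := (((hasDerivAt_pow 6 x).const_mul (2/3 : ℝ)).sub
      ((hasDerivAt_pow 5 x).const_mul (4/5*(s+u)))).add
      ((hasDerivAt_pow 4 x).const_mul (1/4*(s+u)^2))
  refine h.congr_deriv ?_
  push_cast
  ring

private lemma hasDerivAt_F2 (s u x : ℝ) :
    HasDerivAt (fun x : ℝ => x^8/8 - 2/7*(s+u)*x^7 + ((s+u)^2+2*s*u)*x^6/6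
        - 2/5*s*u*(s+u)*x^5 + s^2*u^2*x^4/4)
      (x^3*((x-s)*(u-x))^2) x := by
  have h := (((((hasDerivAt_pow 8 x).div_const 8).sub
      ((hasDerivAt_pow 7 x).const_mul (2/7*(s+u)))).add
      (((hasDerivAt_pow 6 x).const_mul ((s+u)^2+2*s*u)).div_const 6)).sub
      ((hasDerivAt_pow 5 x).const_mul (2/5*s*u*(s+u)))).add
      (((hasDerivAt_pow 4 x).const_mul (s^2*u^2)).div_const 4)
  refine h.congr_deriv ?_
  push_cast
  ring

private lemma integral_h_neg (s u β : ℝ) (hs : 0 < s) (hsu : s < u) (hβ : 0 < β)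
    (h40 : 40 < β * (u - s)^2) :
    (∫ t in s..u, t^3*((1/2)*(s+u-2*t)^2 - (β/2)*((t-s)*(u-t))^2)) < 0 := by
  set F1 : ℝ → ℝ := fun x => 2/3*x^6 - 4/5*(s+u)*x^5 + 1/4*(s+u)^2*x^4 with hF1
  set F2 : ℝ → ℝ := fun x => x^8/8 - 2/7*(s+u)*x^7 + ((s+u)^2+2*s*u)*x^6/6
      - 2/5*s*u*(s+u)*x^5 + s^2*u^2*x^4/4 with hF2
  have hder : ∀ x ∈ uIcc s u,
      HasDerivAt (fun x => (1/2)*F1 x - (β/2)*F2 x)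
        (x^3*((1/2)*(s+u-2*x)^2 - (β/2)*((x-s)*(u-x))^2)) x := by
    intro x _
    have h1 := (hasDerivAt_F1 s u x).const_mul (1/2 : ℝ)
    have h2 := (hasDerivAt_F2 s u x).const_mul (β/2)
    refine (h1.sub h2).congr_deriv ?_
    ring
  have hint : IntervalIntegrable
      (fun x : ℝ => x^3*((1/2)*(s+u-2*x)^2 - (β/2)*((x-s)*(u-x))^2))
      MeasureTheory.volume s u :=
    (by fun_prop : Continuous fun x : ℝ =>
      x^3*((1/2)*(s+u-2*x)^2 - (β/2)*((x-s)*(u-x))^2)).intervalIntegrable s u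
  rw [intervalIntegral.integral_eq_sub_of_hasDerivAt hder hint]
  have hL : 0 < u - s := sub_pos.2 hsu
  have hI2 : F2 u - F2 s
      = s^3*(u-s)^5/30 + s^2*(u-s)^6/20 + s*(u-s)^7/35 + (u-s)^8/168 := by
    simp only [hF2]; ring
  have hkey : 40*(F2 u - F2 s) - (u-s)^2*(F1 u - F1 s)
      = (u-s)^5*(17/140*(u-s)^3 + 26/35*s*(u-s)^2 + 3/2*s^2*(u-s) + s^3) := by
    simp only [hF1, hF2]; ring
  clear_value F1 F2
  have hI2pos : 0 < F2 u - F2 s := by rw [hI2]; positivity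
  have hPpos : 0 < (u-s)^5*(17/140*(u-s)^3 + 26/35*s*(u-s)^2 + 3/2*s^2*(u-s) + s^3) := by
    positivity
  have h1 : (u-s)^2*(F1 u - F1 s) < 40*(F2 u - F2 s) := by linarith
  have h2 : 40*(F2 u - F2 s) < β*(u-s)^2*(F2 u - F2 s) := by nlinarith
  have h4 : F1 u - F1 s < β*(F2 u - F2 s) := by
    have h3 : (u-s)^2*(F1 u - F1 s) < (u-s)^2*(β*(F2 u - F2 s)) := by nlinarith
    exact lt_of_mul_lt_mul_left h3 (by positivity)
  linarith

/-- **The action is unbounded below on long intervals.**  Let `A` be symmetric positive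
semidefinite with largest eigenvalue `β > 0` (i.e. `⟨x, A x⟩ ≤ β‖x‖²` for all `x`, with
equality attained by some eigenvector `v ≠ 0`).  If `t₂ - t₁ > √(40/β)`, the action
`J[Y] = ∫_{t₁}^{t₂} t³((1/2)‖Ẏ‖² - (1/2)⟨Y, A Y⟩) dt` is unbounded below over `C¹` curves
with fixed endpoints `Y(t₁) = a`, `Y(t₂) = b`. -/
theorem nesterov_action_unbounded_below
    (d : ℕ) (hd : 1 ≤ d) (A : Matrix (Fin d) (Fin d) ℝ) (hA : A.PosSemidef)
    (β : ℝ) (hβ : 0 < β)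
    (hβmax : ∀ x : EuclideanSpace ℝ (Fin d), ⟪x, Matrix.toEuclideanLin A x⟫ ≤ β * ‖x‖ ^ 2)
    (hβeig : ∃ v : EuclideanSpace ℝ (Fin d), v ≠ 0 ∧ Matrix.toEuclideanLin A v = β • v)
    (t₁ t₂ : ℝ) (ht₁ : 0 < t₁) (ht : t₁ < t₂) (hgap : t₂ - t₁ > Real.sqrt (40 / β))
    (a b : EuclideanSpace ℝ (Fin d)) :
    ∀ M : ℝ, ∃ Y Y' : ℝ → EuclideanSpace ℝ (Fin d),
      (∀ t ∈ Icc t₁ t₂, HasDerivWithinAt Y (Y' t) (Icc t₁ t₂) t) ∧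
      ContinuousOn Y' (Icc t₁ t₂) ∧ Y t₁ = a ∧ Y t₂ = b ∧
      (∫ t in t₁..t₂, t ^ 3 *
        ((1 / 2) * ‖Y' t‖ ^ 2 - (1 / 2) * ⟪Y t, Matrix.toEuclideanLin A (Y t)⟫)) < M := by
  intro M
  obtain ⟨v, hv, hvA⟩ := hβeig
  have hsym : LinearMap.IsSymmetric (Matrix.toEuclideanLin A) :=
    Matrix.isHermitian_iff_isSymmetric.mp hA.1
  have h40 : 40 < β * (t₂ - t₁)^2 := by
    have hq : Real.sqrt (40/β) ^ 2 = 40/β := Real.sq_sqrt (by positivity)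
    have h1 : 40/β < (t₂ - t₁)^2 := by
      nlinarith [Real.sqrt_nonneg (40/β), hgap]
    calc (40:ℝ) = (40/β)*β := by field_simp
    _ < (t₂-t₁)^2*β := by nlinarith
    _ = β*(t₂-t₁)^2 := by ring
  have hne : t₂ - t₁ ≠ 0 := sub_ne_zero.mpr ht.ne'
  set w : EuclideanSpace ℝ (Fin d) := (t₂ - t₁)⁻¹ • (b - a) with hw
  set g0 : ℝ → ℝ := fun t => t^3 * ((1/2)*‖w‖^2
      - (1/2)*(⟪a, Matrix.toEuclideanLin A a⟫ + 2*(t-t₁)*⟪a, Matrix.toEuclideanLin A w⟫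
        + (t-t₁)^2*⟪w, Matrix.toEuclideanLin A w⟫)) with hg0
  set g1 : ℝ → ℝ := fun t => t^3 * ((t₁+t₂-2*t)*⟪w, v⟫
      - β*((t-t₁)*(t₂-t))*(⟪a, v⟫ + (t-t₁)*⟪w, v⟫)) with hg1
  set g2 : ℝ → ℝ := fun t =>
    t^3*((1/2)*(t₁+t₂-2*t)^2 - (β/2)*((t-t₁)*(t₂-t))^2) * ‖v‖^2 with hg2
  have hcont0 : Continuous g0 := by rw [hg0]; fun_prop
  have hcont1 : Continuous g1 := by rw [hg1]; fun_prop
  have hcont2 : Continuous g2 := by rw [hg2]; fun_prop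
  have hint0 : IntervalIntegrable g0 MeasureTheory.volume t₁ t₂ :=
    hcont0.intervalIntegrable t₁ t₂
  have hint1 : IntervalIntegrable g1 MeasureTheory.volume t₁ t₂ :=
    hcont1.intervalIntegrable t₁ t₂
  have hint2 : IntervalIntegrable g2 MeasureTheory.volume t₁ t₂ :=
    hcont2.intervalIntegrable t₁ t₂
  set P : ℝ := ∫ t in t₁..t₂, g0 t with hP
  set Q : ℝ := ∫ t in t₁..t₂, g1 t with hQ
  set R : ℝ := ∫ t in t₁..t₂, g2 t with hR
  have hRneg : R < 0 := by
    have hbase := integral_h_neg t₁ t₂ β ht₁ ht hβ h40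
    have hvpos : (0:ℝ) < ‖v‖^2 := by
      have : 0 < ‖v‖ := norm_pos_iff.mpr hv
      positivity
    have : R = (∫ t in t₁..t₂,
        t^3*((1/2)*(t₁+t₂-2*t)^2 - (β/2)*((t-t₁)*(t₂-t))^2)) * ‖v‖^2 := by
      rw [hR, hg2, intervalIntegral.integral_mul_const]
    rw [this]
    exact mul_neg_of_neg_of_pos hbase hvpos
  -- choose the scaling constant
  set c : ℝ := max 1 (max ((|Q|+1)/(-R)) (P - M + 1)) with hc
  have hc1 : (1:ℝ) ≤ c := le_max_left _ _
  have hc0 : (0:ℝ) < c := lt_of_lt_of_le one_pos hc1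
  have hcQ : (|Q|+1)/(-R) ≤ c := le_trans (le_max_left _ _) (le_max_right _ _)
  have hcP : P - M + 1 ≤ c := le_trans (le_max_right _ _) (le_max_right _ _)
  have hca : |Q| + 1 ≤ c * (-R) := by
    rw [div_le_iff₀ (by linarith : (0:ℝ) < -R)] at hcQ
    linarith
  have hJlt : P + c * Q + c^2 * R < M := by
    have h5 : c*Q ≤ c*|Q| := mul_le_mul_of_nonneg_left (le_abs_self Q) hc0.le
    have h6 : c*(|Q|+1) ≤ c*(c*(-R)) := mul_le_mul_of_nonneg_left hca hc0.le
    nlinarith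
  -- the curve
  set Y : ℝ → EuclideanSpace ℝ (Fin d) :=
    fun t => a + (t - t₁) • w + (c * ((t - t₁) * (t₂ - t))) • v with hY
  set Y' : ℝ → EuclideanSpace ℝ (Fin d) :=
    fun t => w + (c * (t₁ + t₂ - 2*t)) • v with hY'
  have hwa : ⟪w, Matrix.toEuclideanLin A a⟫ = ⟪a, Matrix.toEuclideanLin A w⟫ := by
    rw [real_inner_comm, hsym]
  have hvAa : ⟪v, Matrix.toEuclideanLin A a⟫ = β * ⟪a, v⟫ := by
    rw [real_inner_comm, hsym, hvA, real_inner_smul_right]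
  have hvAw : ⟪v, Matrix.toEuclideanLin A w⟫ = β * ⟪w, v⟫ := by
    rw [real_inner_comm, hsym, hvA, real_inner_smul_right]
  have hpoint : ∀ t : ℝ, t ^ 3 *
      ((1 / 2) * ‖Y' t‖ ^ 2 - (1 / 2) * ⟪Y t, Matrix.toEuclideanLin A (Y t)⟫)
      = g0 t + c * g1 t + c^2 * g2 t := by
    intro t
    simp only [hY, hY', hg0, hg1, hg2]
    rw [norm_add_sq_real, real_inner_smul_right, norm_smul]
    simp only [map_add, map_smul, hvA, inner_add_left, inner_add_right,
      real_inner_smul_left, real_inner_smul_right, smul_smul,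
      real_inner_self_eq_norm_sq, norm_smul, Real.norm_eq_abs, mul_pow, sq_abs]
    rw [hwa, hvAa, hvAw]
    ring
  refine ⟨Y, Y', ?_, ?_, ?_, ?_, ?_⟩
  · intro t _
    apply HasDerivAt.hasDerivWithinAt
    have hlin : HasDerivAt (fun t : ℝ => t - t₁) 1 t := (hasDerivAt_id t).sub_const t₁
    have h1 := (hlin.smul_const w).const_add a
    have hφ : HasDerivAt (fun t : ℝ => c * ((t - t₁) * (t₂ - t)))
        (c * (t₁ + t₂ - 2*t)) t := by
      have h := (((hasDerivAt_id t).sub_const t₁).mul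
        ((hasDerivAt_const t t₂).sub (hasDerivAt_id t))).const_mul c
      refine h.congr_deriv ?_
      simp only [id_eq, Pi.sub_apply]
      ring
    have h2 := hφ.smul_const v
    have h3 := h1.add h2
    rw [hY']
    exact h3.congr_deriv (by simp)
  · rw [hY']
    exact (by fun_prop : Continuous fun t : ℝ => w + (c * (t₁ + t₂ - 2*t)) • v).continuousOn
  · simp [hY]
  · rw [hY]
    simp only [hw, smul_smul, sub_self, mul_zero, zero_smul, add_zero,
      mul_inv_cancel₀ hne, one_smul]
    abel
  · have hcong : (∫ t in t₁..t₂, t ^ 3 *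
        ((1 / 2) * ‖Y' t‖ ^ 2 - (1 / 2) * ⟪Y t, Matrix.toEuclideanLin A (Y t)⟫))
        = ∫ t in t₁..t₂, (g0 t + c * g1 t + c^2 * g2 t) :=
      intervalIntegral.integral_congr (fun t _ => hpoint t)
    rw [hcong, intervalIntegral.integral_add (hint0.add (hint1.const_mul c))
        (hint2.const_mul (c^2)),
      intervalIntegral.integral_add hint0 (hint1.const_mul c),
      intervalIntegral.integral_const_mul, intervalIntegral.integral_const_mul]
    exact hJlt
end

section
/- Let β > 0 and α ≥ 2√β, and let t₁ < t₂ be real numbers. Then for every continuously differentiable function h : [t₁,t₂] → ℝ with h(t₁) = h(t₂) = 0, one has ∫_{t₁}^{t₂} e^{αt}( ḣ(t)² − β h(t)² ) dt ≥ 0. -/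
open Set

/-- **Positive semidefiniteness of the second variation in the (over/critically) damped case.**
If `β > 0` and `α ≥ 2√β`, then for every admissible `C¹` perturbation `h` on `[t₁, t₂]`
vanishing at both endpoints, `∫_{t₁}^{t₂} e^{αt}(ḣ² - βh²) dt ≥ 0`. -/
theorem overdamped_second_variation_nonneg
    (β α t₁ t₂ : ℝ) (hβ : 0 < β) (hα : 2 * Real.sqrt β ≤ α) (ht : t₁ < t₂) :
    ∀ h h' : ℝ → ℝ,
      (∀ t ∈ Icc t₁ t₂, HasDerivWithinAt h (h' t) (Icc t₁ t₂) t) →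
      ContinuousOn h' (Icc t₁ t₂) → h t₁ = 0 → h t₂ = 0 →
      0 ≤ ∫ t in t₁..t₂, Real.exp (α * t) * ((h' t) ^ 2 - β * (h t) ^ 2) := by
  intro h h' hd hc' h1 h2
  have hsqβ : Real.sqrt β ^ 2 = β := Real.sq_sqrt hβ.le
  have hdisc : 0 ≤ α ^ 2 - 4 * β := by nlinarith [Real.sqrt_nonneg β]
  set s := Real.sqrt (α ^ 2 - 4 * β) with hs_def
  have hs : s ^ 2 = α ^ 2 - 4 * β := Real.sq_sqrt hdisc
  set c := (α - s) / 2 with hc_def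
  have hceq : c ^ 2 - α * c + β = 0 := by
    have : c ^ 2 - α * c + β = (s ^ 2 - (α ^ 2 - 4 * β)) / 4 := by rw [hc_def]; ring
    rw [this, hs]; ring
  have hcont : ContinuousOn h (Icc t₁ t₂) := fun t htm => (hd t htm).continuousWithinAt
  set g : ℝ → ℝ := fun t => c * (Real.exp (α * t) * h t ^ 2) with hg_def
  set g' : ℝ → ℝ := fun t =>
    c * α * Real.exp (α * t) * h t ^ 2 + c * Real.exp (α * t) * (2 * h t * h' t) with hg'_def
  have hgderiv : ∀ t ∈ Icc t₁ t₂, HasDerivWithinAt g (g' t) (Icc t₁ t₂) t := by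
    intro t htm
    have he : HasDerivWithinAt (fun t => Real.exp (α * t)) (Real.exp (α * t) * α)
        (Icc t₁ t₂) t := by
      simpa using (((hasDerivAt_id t).const_mul α).exp.hasDerivWithinAt
        (s := Icc t₁ t₂))
    have hp : HasDerivWithinAt (fun t => h t ^ 2) (2 * h t ^ 1 * h' t) (Icc t₁ t₂) t :=
      (hd t htm).pow 2
    have := (he.mul hp).const_mul c
    refine this.congr_deriv ?_
    simp only [hg'_def]; ring
  have hcontg' : ContinuousOn g' (Icc t₁ t₂) := by
    apply ContinuousOn.add
    · exact (continuousOn_const.mul (Real.continuous_exp.comp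
        (continuous_const.mul continuous_id)).continuousOn).mul (hcont.pow 2)
    · exact (continuousOn_const.mul (Real.continuous_exp.comp
        (continuous_const.mul continuous_id)).continuousOn).mul
        ((continuousOn_const.mul hcont).mul hc')
  have hcontg : ContinuousOn g (Icc t₁ t₂) := fun t htm =>
    (hgderiv t htm).continuousWithinAt
  -- FTC for g
  have hftc : ∫ t in t₁..t₂, g' t = g t₂ - g t₁ := by
    apply intervalIntegral.integral_eq_sub_of_hasDeriv_right_of_le ht.le hcontg
    · intro t htm
      have hmem : Icc t₁ t₂ ∈ nhds t := Icc_mem_nhds htm.1 htm.2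
      exact ((hgderiv t (Ioo_subset_Icc_self htm)).hasDerivAt hmem).hasDerivWithinAt
    · exact (hcontg'.mono (by rw [uIcc_of_le ht.le])).intervalIntegrable
  have hg0 : ∫ t in t₁..t₂, g' t = 0 := by
    rw [hftc, hg_def]; simp [h1, h2]
  -- pointwise identity
  have key : ∀ t, Real.exp (α * t) * ((h' t) ^ 2 - β * (h t) ^ 2)
      = Real.exp (α * t) * (h' t + c * h t) ^ 2 - g' t := by
    intro t
    have : Real.exp (α * t) * (h' t + c * h t) ^ 2 - g' t
        - Real.exp (α * t) * ((h' t) ^ 2 - β * (h t) ^ 2)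
        = Real.exp (α * t) * h t ^ 2 * (c ^ 2 - α * c + β) := by
      simp only [hg'_def]; ring
    have h0 := this
    rw [hceq, mul_zero] at h0
    linarith
  have hcontsq : ContinuousOn (fun t => Real.exp (α * t) * (h' t + c * h t) ^ 2)
      (Icc t₁ t₂) :=
    ((Real.continuous_exp.comp (continuous_const.mul continuous_id)).continuousOn).mul
      ((hc'.add (continuousOn_const.mul hcont)).pow 2)
  have hint1 : IntervalIntegrable (fun t => Real.exp (α * t) * (h' t + c * h t) ^ 2)
      MeasureTheory.volume t₁ t₂ :=
    (hcontsq.mono (by rw [uIcc_of_le ht.le])).intervalIntegrable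
  have hint2 : IntervalIntegrable g' MeasureTheory.volume t₁ t₂ :=
    (hcontg'.mono (by rw [uIcc_of_le ht.le])).intervalIntegrable
  rw [intervalIntegral.integral_congr (g := fun t =>
      Real.exp (α * t) * (h' t + c * h t) ^ 2 - g' t) (fun t _ => key t),
    intervalIntegral.integral_sub hint1 hint2, hg0, sub_zero]
  apply intervalIntegral.integral_nonneg ht.le
  intro t _
  positivity
end

section
/- Let β > 0 and 0 ≤ α < 2√β, and let t₁ < t₂ be real numbers with t₂ − t₁ < 2π/√(4β − α²). Then for every continuously differentiable function h : [t₁,t₂] → ℝ with h(t₁) = h(t₂) = 0, one has ∫_{t₁}^{t₂} e^{αt}( ḣ(t)² − β h(t)² ) dt ≥ 0. -/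
open Set

/-- **Positive semidefiniteness of the second variation in the underdamped case on short
intervals.**  If `β > 0`, `0 ≤ α < 2√β`, and `t₂ - t₁ < 2π/√(4β - α²)`, then for every
admissible `C¹` perturbation `h` on `[t₁, t₂]` vanishing at both endpoints,
`∫_{t₁}^{t₂} e^{αt}(ḣ² - βh²) dt ≥ 0`. -/
theorem underdamped_second_variation_nonneg_short_interval
    (β α t₁ t₂ : ℝ) (hβ : 0 < β) (hα0 : 0 ≤ α) (hα : α < 2 * Real.sqrt β) (ht : t₁ < t₂)
    (hgap : t₂ - t₁ < 2 * Real.pi / Real.sqrt (4 * β - α ^ 2)) :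
    ∀ h h' : ℝ → ℝ,
      (∀ t ∈ Icc t₁ t₂, HasDerivWithinAt h (h' t) (Icc t₁ t₂) t) →
      ContinuousOn h' (Icc t₁ t₂) → h t₁ = 0 → h t₂ = 0 →
      0 ≤ ∫ t in t₁..t₂, Real.exp (α * t) * ((h' t) ^ 2 - β * (h t) ^ 2) := by
  intro h h' hderiv hcont h1 h2
  have hle : t₁ ≤ t₂ := ht.le
  have hβ4 : 0 < 4 * β - α ^ 2 := by
    have hs : Real.sqrt β ^ 2 = β := Real.sq_sqrt hβ.le
    nlinarith [Real.sqrt_nonneg β]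
  set ω : ℝ := Real.sqrt (4 * β - α ^ 2) / 2 with hωdef
  have hω : 0 < ω := div_pos (Real.sqrt_pos.mpr hβ4) two_pos
  have hsq : Real.sqrt (4 * β - α ^ 2) = 2 * ω := by rw [hωdef]; ring
  have hω2 : ω ^ 2 = β - α ^ 2 / 4 := by
    have := Real.sq_sqrt hβ4.le
    rw [hωdef]; nlinarith
  have hgap' : t₂ - t₁ < Real.pi / ω := by
    rw [hsq] at hgap
    have : 2 * Real.pi / (2 * ω) = Real.pi / ω := by
      field_simp
    linarith [this ▸ hgap]
  set ε : ℝ := (Real.pi / ω - (t₂ - t₁)) / 2 with hεdef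
  have hε : 0 < ε := by simp only [hεdef]; linarith
  set t₀ : ℝ := t₁ - ε with ht₀def
  have hupper : ∀ t ∈ Icc t₁ t₂, ω * (t - t₀) < Real.pi := by
    intro t htm
    have h1' : t - t₀ ≤ t₂ - t₀ := by linarith [htm.2]
    have h2' : t₂ - t₀ < Real.pi / ω := by
      simp only [ht₀def, hεdef]; linarith
    calc ω * (t - t₀) ≤ ω * (t₂ - t₀) := by nlinarith
      _ < ω * (Real.pi / ω) := by nlinarith
      _ = Real.pi := by field_simp
  have hlower : ∀ t ∈ Icc t₁ t₂, 0 < ω * (t - t₀) := by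
    intro t htm
    have : ε ≤ t - t₀ := by simp only [ht₀def]; linarith [htm.1]
    nlinarith
  have hsin : ∀ t ∈ Icc t₁ t₂, 0 < Real.sin (ω * (t - t₀)) := fun t htm =>
    Real.sin_pos_of_pos_of_lt_pi (hlower t htm) (hupper t htm)
  -- the Riccati solution q
  set q : ℝ → ℝ := fun t => -(α / 2) + ω * (Real.cos (ω * (t - t₀)) / Real.sin (ω * (t - t₀)))
    with hqdef
  have hqderiv : ∀ t ∈ Icc t₁ t₂, HasDerivAt q (-(β + α * q t + q t ^ 2)) t := by
    intro t htm
    have hs := hsin t htm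
    have hsne : Real.sin (ω * (t - t₀)) ≠ 0 := ne_of_gt hs
    have hu : HasDerivAt (fun s : ℝ => ω * (s - t₀)) ω t := by
      simpa using ((hasDerivAt_id t).sub_const t₀).const_mul ω
    have hsin' : HasDerivAt (fun s : ℝ => Real.sin (ω * (s - t₀)))
        (Real.cos (ω * (t - t₀)) * ω) t := (Real.hasDerivAt_sin _).comp t hu
    have hcos' : HasDerivAt (fun s : ℝ => Real.cos (ω * (s - t₀)))
        (-Real.sin (ω * (t - t₀)) * ω) t := (Real.hasDerivAt_cos _).comp t hu
    have hdiv : HasDerivAt (fun s : ℝ => Real.cos (ω * (s - t₀)) / Real.sin (ω * (s - t₀)))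
        ((-Real.sin (ω * (t - t₀)) * ω * Real.sin (ω * (t - t₀)) -
          Real.cos (ω * (t - t₀)) * (Real.cos (ω * (t - t₀)) * ω)) /
          Real.sin (ω * (t - t₀)) ^ 2) t := hcos'.div hsin' hsne
    have hq' : HasDerivAt q
        (ω * ((-Real.sin (ω * (t - t₀)) * ω * Real.sin (ω * (t - t₀)) -
          Real.cos (ω * (t - t₀)) * (Real.cos (ω * (t - t₀)) * ω)) /
          Real.sin (ω * (t - t₀)) ^ 2)) t := by
      simpa [hqdef] using (hdiv.const_mul ω).const_add (-(α / 2))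
    have hpyth : Real.sin (ω * (t - t₀)) ^ 2 + Real.cos (ω * (t - t₀)) ^ 2 = 1 :=
      Real.sin_sq_add_cos_sq _
    have hβ' : β = ω ^ 2 + α ^ 2 / 4 := by linarith
    have hnum : -Real.sin (ω * (t - t₀)) * ω * Real.sin (ω * (t - t₀)) -
        Real.cos (ω * (t - t₀)) * (Real.cos (ω * (t - t₀)) * ω) = -ω := by
      linear_combination (-ω) * hpyth
    have e1 : -(β + α * q t + q t ^ 2) =
        -(ω ^ 2) * (1 + (Real.cos (ω * (t - t₀)) / Real.sin (ω * (t - t₀))) ^ 2) := by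
      simp only [hqdef]
      rw [hβ']; ring
    have e2 : 1 + (Real.cos (ω * (t - t₀)) / Real.sin (ω * (t - t₀))) ^ 2 =
        1 / Real.sin (ω * (t - t₀)) ^ 2 := by
      rw [div_pow]
      field_simp
      exact hpyth
    have hval : ω * ((-Real.sin (ω * (t - t₀)) * ω * Real.sin (ω * (t - t₀)) -
          Real.cos (ω * (t - t₀)) * (Real.cos (ω * (t - t₀)) * ω)) /
          Real.sin (ω * (t - t₀)) ^ 2) = -(β + α * q t + q t ^ 2) := by
      rw [hnum, e1, e2]; ring
    exact hval ▸ hq'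
  have hqcont : ContinuousOn q (Icc t₁ t₂) := fun t htm =>
    ((hqderiv t htm).continuousAt).continuousWithinAt
  have hhcont : ContinuousOn h (Icc t₁ t₂) := fun t htm =>
    (hderiv t htm).continuousWithinAt
  -- the functions
  set F : ℝ → ℝ := fun t => Real.exp (α * t) * (q t * h t ^ 2) with hFdef
  set G : ℝ → ℝ := fun t => Real.exp (α * t) * (h' t - q t * h t) ^ 2 with hGdef
  set D : ℝ → ℝ := fun t => Real.exp (α * t) * ((h' t) ^ 2 - β * (h t) ^ 2) - G t with hDdef
  have hFcont : ContinuousOn F (Icc t₁ t₂) := by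
    apply ContinuousOn.mul
    · exact (Real.continuous_exp.comp (continuous_const.mul continuous_id)).continuousOn
    · exact hqcont.mul (hhcont.pow 2)
  have hFderiv : ∀ t ∈ Ioo t₁ t₂, HasDerivWithinAt F (D t) (Ioi t) t := by
    intro t htm
    have htmem : t ∈ Icc t₁ t₂ := Ioo_subset_Icc_self htm
    have hnhds : Icc t₁ t₂ ∈ nhds t := Icc_mem_nhds htm.1 htm.2
    have hh : HasDerivAt h (h' t) t := (hderiv t htmem).hasDerivAt hnhds
    have hq := hqderiv t htmem
    have hexp : HasDerivAt (fun s : ℝ => Real.exp (α * s)) (Real.exp (α * t) * α) t := by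
      simpa [Function.comp_def] using (Real.hasDerivAt_exp (α * t)).comp t ((hasDerivAt_id t).const_mul α)
    have hinner : HasDerivAt (fun s => q s * h s ^ 2)
        (-(β + α * q t + q t ^ 2) * h t ^ 2 + q t * (2 * h t * h' t)) t := by
      have hh2 : HasDerivAt (fun s => h s ^ 2) (2 * h t * h' t) t := by
        simpa [mul_comm, mul_assoc, mul_left_comm, Pi.pow_def] using
          (hh.pow 2 : HasDerivAt (fun s => h s ^ 2) (2 * h t ^ 1 * h' t) t)
      exact hq.mul hh2
    have hF : HasDerivAt F
        (Real.exp (α * t) * α * (q t * h t ^ 2) +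
          Real.exp (α * t) * (-(β + α * q t + q t ^ 2) * h t ^ 2 + q t * (2 * h t * h' t))) t :=
      hexp.mul hinner
    have : HasDerivAt F (D t) t := by
      convert hF using 1
      simp only [hDdef, hGdef]
      ring
    exact this.hasDerivWithinAt
  have hGcont : ContinuousOn G (Icc t₁ t₂) := by
    apply ContinuousOn.mul
    · exact (Real.continuous_exp.comp (continuous_const.mul continuous_id)).continuousOn
    · exact ((hcont.sub (hqcont.mul hhcont)).pow 2)
  have hIcont : ContinuousOn (fun t => Real.exp (α * t) * ((h' t) ^ 2 - β * (h t) ^ 2))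
      (Icc t₁ t₂) := by
    apply ContinuousOn.mul
    · exact (Real.continuous_exp.comp (continuous_const.mul continuous_id)).continuousOn
    · exact (hcont.pow 2).sub (continuousOn_const.mul (hhcont.pow 2))
  have hDcont : ContinuousOn D (Icc t₁ t₂) := hIcont.sub hGcont
  have hDint : IntervalIntegrable D MeasureTheory.volume t₁ t₂ :=
    hDcont.intervalIntegrable_of_Icc hle
  have hGint : IntervalIntegrable G MeasureTheory.volume t₁ t₂ :=
    hGcont.intervalIntegrable_of_Icc hle
  have hFTC : ∫ t in t₁..t₂, D t = F t₂ - F t₁ :=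
    intervalIntegral.integral_eq_sub_of_hasDeriv_right_of_le hle hFcont hFderiv hDint
  have hF0 : F t₂ - F t₁ = 0 := by simp [hFdef, h1, h2]
  have hGnonneg : 0 ≤ ∫ t in t₁..t₂, G t := by
    apply intervalIntegral.integral_nonneg hle
    intro u _
    simp only [hGdef]
    positivity
  have hsplit : (fun t => Real.exp (α * t) * ((h' t) ^ 2 - β * (h t) ^ 2)) = fun t => D t + G t := by
    funext t
    simp only [hDdef]
    ring
  calc (0 : ℝ) ≤ ∫ t in t₁..t₂, G t := hGnonneg
    _ = (∫ t in t₁..t₂, D t) + ∫ t in t₁..t₂, G t := by rw [hFTC, hF0]; ring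
    _ = ∫ t in t₁..t₂, (D t + G t) := (intervalIntegral.integral_add hDint hGint).symm
    _ = ∫ t in t₁..t₂, Real.exp (α * t) * ((h' t) ^ 2 - β * (h t) ^ 2) := by rw [hsplit]
end

section
/- Let β > 0 and 0 ≤ α < 2√β, and let t₁ < t₂ be real numbers with t₂ − t₁ > 2π/√(4β − α²). Then there exists a continuously differentiable function h : [t₁,t₂] → ℝ with h(t₁) = h(t₂) = 0 such that ∫_{t₁}^{t₂} e^{αt}( ḣ(t)² − β h(t)² ) dt < 0. -/
open Set

/-- **Negativity of the second variation in the underdamped case on long intervals.**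
If `β > 0`, `0 ≤ α < 2√β`, and `t₂ - t₁ > 2π/√(4β - α²)`, then there is an admissible `C¹`
perturbation `h` on `[t₁, t₂]` vanishing at both endpoints with
`∫_{t₁}^{t₂} e^{αt}(ḣ² - βh²) dt < 0`. -/
theorem underdamped_second_variation_negative_long_interval
    (β α t₁ t₂ : ℝ) (hβ : 0 < β) (hα0 : 0 ≤ α) (hα : α < 2 * Real.sqrt β) (ht : t₁ < t₂)
    (hgap : t₂ - t₁ > 2 * Real.pi / Real.sqrt (4 * β - α ^ 2)) :
    ∃ h h' : ℝ → ℝ,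
      (∀ t ∈ Icc t₁ t₂, HasDerivWithinAt h (h' t) (Icc t₁ t₂) t) ∧
      ContinuousOn h' (Icc t₁ t₂) ∧ h t₁ = 0 ∧ h t₂ = 0 ∧
      (∫ t in t₁..t₂, Real.exp (α * t) * ((h' t) ^ 2 - β * (h t) ^ 2)) < 0 := by
  have hd : 0 < t₂ - t₁ := by linarith
  have hπ := Real.pi_pos
  set k : ℝ := Real.pi / (t₂ - t₁) with hkdef
  have hk : 0 < k := div_pos hπ hd
  have hβs : Real.sqrt β ^ 2 = β := Real.sq_sqrt hβ.le
  have hα2 : α ^ 2 < 4 * β := by nlinarith [Real.sqrt_nonneg β]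
  have hs : 0 < Real.sqrt (4 * β - α ^ 2) := Real.sqrt_pos.mpr (by linarith)
  have hs2 : Real.sqrt (4 * β - α ^ 2) ^ 2 = 4 * β - α ^ 2 := Real.sq_sqrt (by linarith)
  have hk2 : 4 * k ^ 2 + α ^ 2 < 4 * β := by
    have h1 : 2 * Real.pi < Real.sqrt (4 * β - α ^ 2) * (t₂ - t₁) := by
      rw [gt_iff_lt, div_lt_iff₀ hs] at hgap
      linarith
    have hklt : k < Real.sqrt (4 * β - α ^ 2) / 2 := by
      rw [hkdef, div_lt_div_iff₀ hd two_pos]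
      linarith
    nlinarith [hs.le]
  have hkt : k * (t₂ - t₁) = Real.pi := div_mul_cancel₀ _ hd.ne'
  set f : ℝ → ℝ := fun t => Real.exp (-(α/2) * t) * Real.sin (k * (t - t₁)) with hf
  set f' : ℝ → ℝ := fun t => Real.exp (-(α/2) * t) *
      (k * Real.cos (k * (t - t₁)) - (α/2) * Real.sin (k * (t - t₁))) with hf'
  have hderiv : ∀ t : ℝ, HasDerivAt f (f' t) t := by
    intro t
    have e1 : HasDerivAt (fun t : ℝ => -(α/2) * t) (-(α/2)) t := by
      simpa using (hasDerivAt_id t).const_mul (-(α/2))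
    have s1 : HasDerivAt (fun t : ℝ => k * (t - t₁)) k t := by
      simpa using ((hasDerivAt_id t).sub_const t₁).const_mul k
    have hmul := e1.exp.mul s1.sin
    refine hmul.congr_deriv ?_
    simp only [hf']
    ring
  set F : ℝ → ℝ := fun t => (k^2/2 + α^2/8 - β/2) * t
      + (k^2/2 - α^2/8 + β/2) * Real.sin (2*(k*(t - t₁))) / (2*k)
      + (α*k/2) * Real.cos (2*(k*(t - t₁))) / (2*k) with hF
  have key : ∀ t : ℝ, Real.exp (α*t) * ((f' t)^2 - β * (f t)^2)
      = (k^2/2 + α^2/8 - β/2) + (k^2/2 - α^2/8 + β/2) * Real.cos (2*(k*(t-t₁)))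
        - (α*k/2) * Real.sin (2*(k*(t-t₁))) := by
    intro t
    have hexp : Real.exp (α*t) * Real.exp (-(α/2)*t) * Real.exp (-(α/2)*t) = 1 := by
      rw [← Real.exp_add, ← Real.exp_add]
      rw [show α*t + -(α/2)*t + -(α/2)*t = 0 by ring, Real.exp_zero]
    have pyth := Real.sin_sq_add_cos_sq (k*(t-t₁))
    have c2 : Real.cos (2*(k*(t-t₁))) = 2 * Real.cos (k*(t-t₁))^2 - 1 := Real.cos_two_mul _
    have s2 : Real.sin (2*(k*(t-t₁))) = 2 * Real.sin (k*(t-t₁)) * Real.cos (k*(t-t₁)) :=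
      Real.sin_two_mul _
    simp only [hf, hf']
    rw [c2, s2]
    linear_combination ((k*Real.cos (k*(t-t₁)) - α/2*Real.sin (k*(t-t₁)))^2
        - β*Real.sin (k*(t-t₁))^2) * hexp + (α^2/4 - β) * pyth
  have hdF : ∀ t : ℝ, HasDerivAt F (Real.exp (α*t) * ((f' t)^2 - β * (f t)^2)) t := by
    intro t
    have s1 : HasDerivAt (fun t : ℝ => 2*(k*(t - t₁))) (2*k) t := by
      have := ((hasDerivAt_id t).sub_const t₁).const_mul (2*k)
      simpa [mul_assoc] using this
    have d1 : HasDerivAt (fun t : ℝ => (k^2/2 + α^2/8 - β/2) * t) (k^2/2 + α^2/8 - β/2) t := by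
      simpa using (hasDerivAt_id t).const_mul (k^2/2 + α^2/8 - β/2)
    have d2 := (s1.sin.const_mul (k^2/2 - α^2/8 + β/2)).div_const (2*k)
    have d3 := (s1.cos.const_mul (α*k/2)).div_const (2*k)
    have hsum := (d1.add d2).add d3
    rw [key t]
    refine hsum.congr_deriv ?_
    field_simp
    ring
  have hint : (∫ t in t₁..t₂, Real.exp (α*t) * ((f' t)^2 - β*(f t)^2)) = F t₂ - F t₁ := by
    apply intervalIntegral.integral_eq_sub_of_hasDerivAt (fun t _ => hdF t)
    apply Continuous.intervalIntegrable
    simp only [hf, hf']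
    fun_prop
  have hkt2 : 2*(k*(t₂ - t₁)) = 2*Real.pi := by rw [hkt]
  have e2 : F t₂ = (k^2/2 + α^2/8 - β/2) * t₂ + (α*k/2)/(2*k) := by
    simp only [hF, hkt2, Real.sin_two_pi, Real.cos_two_pi]
    ring
  have e1 : F t₁ = (k^2/2 + α^2/8 - β/2) * t₁ + (α*k/2)/(2*k) := by
    simp only [hF, sub_self, mul_zero, Real.sin_zero, Real.cos_zero]
    ring
  refine ⟨f, f', fun t _ => (hderiv t).hasDerivWithinAt, ?_, ?_, ?_, ?_⟩
  · apply Continuous.continuousOn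
    simp only [hf']
    fun_prop
  · simp [hf]
  · simp [hf, hkt]
  · rw [hint, e2, e1]
    have hA : k^2/2 + α^2/8 - β/2 < 0 := by linarith
    nlinarith [mul_neg_of_neg_of_pos hA hd]
end

section
/- Let t₁ < t₂, set T = t₂ − t₁, let k be a positive integer, and define h : [t₁,t₂] → ℝ by h(t) = sin( kπ(t − t₁)/T ). Then ∫_{t₁}^{t₂} e^{t}( ḣ(t)² − h(t)² ) dt < 0 if and only if T > √2 · kπ. -/
/-- **Sign of the second variation at a sine perturbation (case `α = β = 1`).**
For `h(t) = sin(kπ(t - t₁)/T)` with `T = t₂ - t₁` and `k` a positive integer, the second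
variation integral `∫_{t₁}^{t₂} e^t (ḣ² - h²) dt` is negative if and only if `T > √2·kπ`. -/
theorem sine_perturbation_second_variation_neg_iff
    (t₁ t₂ : ℝ) (ht : t₁ < t₂) (k : ℕ) (hk : 0 < k) :
    (∫ t in t₁..t₂, Real.exp t *
        ((k * Real.pi / (t₂ - t₁) * Real.cos (k * Real.pi * (t - t₁) / (t₂ - t₁))) ^ 2
          - (Real.sin (k * Real.pi * (t - t₁) / (t₂ - t₁))) ^ 2)) < 0
      ↔ t₂ - t₁ > Real.sqrt 2 * k * Real.pi := by
  have hπ := Real.pi_pos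
  have hT : (0:ℝ) < t₂ - t₁ := sub_pos.mpr ht
  set T : ℝ := t₂ - t₁ with hTdef
  have hTne : T ≠ 0 := ne_of_gt hT
  set ω : ℝ := (k : ℝ) * Real.pi / T with hω
  have hkpos : (0:ℝ) < (k:ℝ) := by exact_mod_cast hk
  have hωpos : 0 < ω := div_pos (mul_pos hkpos hπ) hT
  have key : ∀ t : ℝ, (k : ℝ) * Real.pi * (t - t₁) / T = ω * (t - t₁) := by
    intro t; rw [hω]; ring
  simp only [key]
  set c : ℝ := 2 * ω with hc
  have hcne : 1 + c ^ 2 ≠ 0 := by positivity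
  set F : ℝ → ℝ := fun t => Real.exp t * ((ω ^ 2 - 1) / 2) +
      (ω ^ 2 + 1) / (2 * (1 + c ^ 2)) *
        (Real.exp t * (Real.cos (c * (t - t₁)) + c * Real.sin (c * (t - t₁)))) with hF
  have hderiv : ∀ t ∈ Set.uIcc t₁ t₂, HasDerivAt F
      (Real.exp t * ((ω * Real.cos (ω * (t - t₁))) ^ 2 - Real.sin (ω * (t - t₁)) ^ 2)) t := by
    intro t _
    have h1 : HasDerivAt (fun t : ℝ => c * (t - t₁)) c t := by
      simpa using ((hasDerivAt_id t).sub_const t₁).const_mul c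
    have hcos : HasDerivAt (fun t : ℝ => Real.cos (c * (t - t₁)))
        (-Real.sin (c * (t - t₁)) * c) t := (Real.hasDerivAt_cos _).comp t h1
    have hsin : HasDerivAt (fun t : ℝ => Real.sin (c * (t - t₁)))
        (Real.cos (c * (t - t₁)) * c) t := (Real.hasDerivAt_sin _).comp t h1
    have hexp := Real.hasDerivAt_exp t
    have hmain : HasDerivAt F
        (Real.exp t * ((ω ^ 2 - 1) / 2) +
          (ω ^ 2 + 1) / (2 * (1 + c ^ 2)) *
            (Real.exp t * (Real.cos (c * (t - t₁)) + c * Real.sin (c * (t - t₁))) +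
              Real.exp t * ((-Real.sin (c * (t - t₁)) * c) + c * (Real.cos (c * (t - t₁)) * c)))) t := by
      exact ((hexp.mul_const _).add (((hexp.mul (hcos.add (hsin.const_mul c)))).const_mul _))
    convert hmain using 1
    have h2 : Real.cos (c * (t - t₁)) = 2 * Real.cos (ω * (t - t₁)) ^ 2 - 1 := by
      rw [show c * (t - t₁) = 2 * (ω * (t - t₁)) by rw [hc]; ring, Real.cos_two_mul]
    have h3 : Real.sin (ω * (t - t₁)) ^ 2 = 1 - Real.cos (ω * (t - t₁)) ^ 2 := Real.sin_sq _
    rw [h3, h2]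
    field_simp
    ring
  have hint : IntervalIntegrable
      (fun t => Real.exp t * ((ω * Real.cos (ω * (t - t₁))) ^ 2 - Real.sin (ω * (t - t₁)) ^ 2))
      MeasureTheory.volume t₁ t₂ := by
    apply Continuous.intervalIntegrable
    fun_prop
  rw [intervalIntegral.integral_eq_sub_of_hasDerivAt hderiv hint]
  -- evaluate F at endpoints
  have hcT : c * (t₂ - t₁) = (k : ℝ) * (2 * Real.pi) := by
    rw [hc, hω]
    field_simp
    ring
  have hcos2 : Real.cos (c * (t₂ - t₁)) = 1 := by
    rw [hcT]; exact Real.cos_nat_mul_two_pi k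
  have hsin2 : Real.sin (c * (t₂ - t₁)) = 0 := by
    rw [show (k:ℝ) * (2 * Real.pi) = ((2 * k : ℕ) : ℝ) * Real.pi by push_cast; ring] at hcT
    rw [hcT]; exact Real.sin_nat_mul_pi _
  have hval : F t₂ - F t₁ =
      (Real.exp t₂ - Real.exp t₁) * (ω ^ 2 * (2 * ω ^ 2 - 1) / (1 + c ^ 2)) := by
    rw [hF]
    simp only [hcos2, hsin2, sub_self, mul_zero, Real.cos_zero, Real.sin_zero]
    have hc' : c ^ 2 = 4 * ω ^ 2 := by rw [hc]; ring
    field_simp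
    rw [hc']
    ring
  rw [hval]
  have hE : 0 < Real.exp t₂ - Real.exp t₁ := sub_pos.mpr (Real.exp_lt_exp.mpr ht)
  have hden : (0:ℝ) < 1 + c ^ 2 := by positivity
  have hT2 : (0:ℝ) < T ^ 2 := by positivity
  have hkπ : 0 < (k:ℝ) * Real.pi := mul_pos hkpos hπ
  have hiff : Real.sqrt 2 * (k:ℝ) * Real.pi < T ↔ 2 * ((k:ℝ) * Real.pi) ^ 2 < T ^ 2 := by
    rw [show Real.sqrt 2 * (k:ℝ) * Real.pi = Real.sqrt (2 * ((k:ℝ) * Real.pi) ^ 2) by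
      rw [Real.sqrt_mul (by norm_num), Real.sqrt_sq hkπ.le]; ring]
    exact Real.sqrt_lt' hT
  have hωiff : 2 * ω ^ 2 < 1 ↔ 2 * ((k:ℝ) * Real.pi) ^ 2 < T ^ 2 := by
    rw [hω, div_pow, ← mul_div_assoc, div_lt_one hT2]
  constructor
  · intro h
    have hK : ω ^ 2 * (2 * ω ^ 2 - 1) / (1 + c ^ 2) < 0 := by
      by_contra h'
      push_neg at h'
      exact absurd (mul_nonneg hE.le h') (not_le.mpr h)
    have hnum : ω ^ 2 * (2 * ω ^ 2 - 1) < 0 := by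
      by_contra h'
      push_neg at h'
      exact absurd (div_nonneg h' hden.le) (not_le.mpr hK)
    have hω2 : 2 * ω ^ 2 < 1 := by nlinarith [sq_nonneg ω, hωpos]
    exact hiff.mpr (hωiff.mp hω2)
  · intro h
    have hω2 : 2 * ω ^ 2 < 1 := hωiff.mpr (hiff.mp h)
    have hnum : ω ^ 2 * (2 * ω ^ 2 - 1) < 0 :=
      mul_neg_of_pos_of_neg (by positivity) (by linarith)
    exact mul_neg_of_pos_of_neg hE (div_neg_of_neg_of_pos hnum hden)
end

section
/- Let β > 0 and t₁ > 0. There exists T > 0 such that for every t₂ with t₁ < t₂ ≤ t₁ + T and every continuously differentiable function h : [t₁,t₂] → ℝ with h(t₁) = h(t₂) = 0, one has ∫_{t₁}^{t₂} t³( ḣ(t)² − β h(t)² ) dt ≥ 0. -/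
open Set

/-- **Positive semidefiniteness of the second variation on short intervals** (vanishing
damping `3/t`, scalar quadratic loss `f(x) = βx²/2`).  For every `β > 0` and `t₁ > 0` there
is `T > 0` such that for every `t₂` with `t₁ < t₂ ≤ t₁ + T` and every admissible `C¹`
perturbation `h` on `[t₁, t₂]` vanishing at both endpoints,
`∫_{t₁}^{t₂} t³(ḣ² - βh²) dt ≥ 0`. -/
theorem vanishing_damping_second_variation_nonneg_short_interval
    (β t₁ : ℝ) (hβ : 0 < β) (ht₁ : 0 < t₁) :
    ∃ T > (0 : ℝ), ∀ t₂ : ℝ, t₁ < t₂ → t₂ ≤ t₁ + T →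
      ∀ h h' : ℝ → ℝ,
        (∀ t ∈ Icc t₁ t₂, HasDerivWithinAt h (h' t) (Icc t₁ t₂) t) →
        ContinuousOn h' (Icc t₁ t₂) → h t₁ = 0 → h t₂ = 0 →
        0 ≤ ∫ t in t₁..t₂, t ^ 3 * ((h' t) ^ 2 - β * (h t) ^ 2) := by
  obtain ⟨c, hc_def, hc⟩ : ∃ c : ℝ, c = t₁ ^ 3 / (β * (t₁ + 1) ^ 3) ∧ 0 < c :=
    ⟨_, rfl, by positivity⟩
  refine ⟨min 1 (Real.sqrt c), lt_min one_pos (Real.sqrt_pos.mpr hc), ?_⟩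
  intro t₂ h12 hT h h' hderiv hcont' hh1 hh2
  have hle : t₁ ≤ t₂ := h12.le
  set L : ℝ := t₂ - t₁ with hL_def
  have hL : 0 < L := sub_pos.mpr h12
  have hL1 : L ≤ 1 := by
    have := le_trans (by linarith : L ≤ min 1 (Real.sqrt c)) (min_le_left _ _)
    linarith
  have hLc : L ^ 2 ≤ c := by
    have h1 : L ≤ Real.sqrt c :=
      le_trans (by linarith : L ≤ min 1 (Real.sqrt c)) (min_le_right _ _)
    calc L ^ 2 ≤ Real.sqrt c ^ 2 := by nlinarith [hL.le]
    _ = c := Real.sq_sqrt hc.le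
  -- continuity of h
  have hch : ContinuousOn h (Icc t₁ t₂) := fun t ht => (hderiv t ht).continuousWithinAt
  have hint' : IntervalIntegrable h' MeasureTheory.volume t₁ t₂ :=
    hcont'.intervalIntegrable_of_Icc hle
  have habs : IntervalIntegrable (fun s => |h' s|) MeasureTheory.volume t₁ t₂ :=
    (hcont'.abs).intervalIntegrable_of_Icc hle
  have hsq : IntervalIntegrable (fun s => (h' s) ^ 2) MeasureTheory.volume t₁ t₂ :=
    (hcont'.pow 2).intervalIntegrable_of_Icc hle
  set I : ℝ := ∫ s in t₁..t₂, (h' s) ^ 2 with hI_def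
  have hI0 : 0 ≤ I :=
    intervalIntegral.integral_nonneg hle fun s _ => sq_nonneg _
  set A : ℝ := ∫ s in t₁..t₂, |h' s| with hA_def
  have hA0 : 0 ≤ A :=
    intervalIntegral.integral_nonneg hle fun s _ => abs_nonneg _
  clear_value L I A
  -- FTC: h t = ∫_{t₁}^t h'
  have hftc : ∀ t ∈ Icc t₁ t₂, h t = ∫ s in t₁..t, h' s := by
    intro t ht
    have ht1 : t₁ ≤ t := ht.1
    have ht2 : t ≤ t₂ := ht.2
    have key : ∫ s in t₁..t, h' s = h t - h t₁ := by
      apply intervalIntegral.integral_eq_sub_of_hasDeriv_right_of_le ht1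
      · exact hch.mono (Icc_subset_Icc le_rfl ht2)
      · intro x hx
        have hx' : x ∈ Icc t₁ t₂ := ⟨hx.1.le, hx.2.le.trans ht2⟩
        refine (hderiv x hx').mono_of_mem_nhdsWithin ?_
        exact Filter.mem_of_superset (Ioc_mem_nhdsGT (lt_of_lt_of_le hx.2 ht2))
          (Ioc_subset_Icc_self.trans (Icc_subset_Icc hx'.1 le_rfl))
      · exact hint'.mono_set (by
          rw [uIcc_of_le hle, uIcc_of_le ht1]
          exact Icc_subset_Icc le_rfl ht2)
    rw [key, hh1, sub_zero]
  -- pointwise bound |h t| ≤ A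
  have hhA : ∀ t ∈ Icc t₁ t₂, |h t| ≤ A := by
    intro t ht
    rw [hftc t ht]
    calc |∫ s in t₁..t, h' s| ≤ ∫ s in t₁..t, |h' s| :=
          intervalIntegral.abs_integral_le_integral_abs ht.1
    _ ≤ A := by
          rw [hA_def]
          apply intervalIntegral.integral_mono_interval le_rfl ht.1 ht.2
          · filter_upwards with s using abs_nonneg _
          · exact habs
  -- Cauchy–Schwarz via ε-trick: A² ≤ L * I
  have hCS : ∀ ε : ℝ, 0 < ε → A ≤ (ε * I + L / ε) / 2 := by
    intro ε hε
    have hmono : A ≤ ∫ s in t₁..t₂, (ε * (h' s) ^ 2 + 1 / ε) / 2 := by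
      rw [hA_def]
      apply intervalIntegral.integral_mono_on hle habs
      · exact (((hcont'.pow 2).const_smul ε).add continuousOn_const).div_const 2
          |>.intervalIntegrable_of_Icc hle
      · intro s _
        have h2 : 2 * ε * |h' s| ≤ ε ^ 2 * (h' s) ^ 2 + 1 := by
          nlinarith [sq_nonneg (ε * |h' s| - 1), sq_abs (h' s)]
        have h3 : (ε * (h' s) ^ 2 + 1 / ε) / 2 = (ε ^ 2 * (h' s) ^ 2 + 1) / (2 * ε) := by
          field_simp
        rw [h3, le_div_iff₀ (by positivity)]
        linarith
    have hcalc : ∫ s in t₁..t₂, (ε * (h' s) ^ 2 + 1 / ε) / 2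
        = (ε * I + L / ε) / 2 := by
      rw [intervalIntegral.integral_div, intervalIntegral.integral_add
        (hsq.const_mul ε) intervalIntegrable_const,
        intervalIntegral.integral_const_mul, intervalIntegral.integral_const]
      rw [hI_def, hL_def]
      simp only [smul_eq_mul]
      ring
    linarith [hmono, hcalc.le, hcalc.ge]
  have hA2 : A ^ 2 ≤ L * I := by
    rcases eq_or_lt_of_le hI0 with hI | hI
    · -- I = 0 : show A ≤ 0
      have hAle : A ≤ 0 := by
        by_contra hA
        push_neg at hA
        have := hCS (L / A) (by positivity)
        rw [← hI] at this
        have : A ≤ (0 + A) / 2 := by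
          have hx : L / A * 0 + L / (L / A) = 0 + A := by
            field_simp
            ring
          linarith [this, hx.le, hx.ge]
        linarith
      have : A = 0 := le_antisymm hAle hA0
      nlinarith
    · -- I > 0 : take ε = √L / √I
      have hsL := Real.sq_sqrt hL.le
      have hsI := Real.sq_sqrt hI.le
      have hsLpos : 0 < Real.sqrt L := Real.sqrt_pos.mpr hL
      have hsIpos : 0 < Real.sqrt I := Real.sqrt_pos.mpr hI
      have := hCS (Real.sqrt L / Real.sqrt I) (by positivity)
      have hkey : Real.sqrt L / Real.sqrt I * I + L / (Real.sqrt L / Real.sqrt I)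
          = 2 * (Real.sqrt L * Real.sqrt I) := by
        field_simp
        nlinarith [hsL, hsI]
      have hA_le : A ≤ Real.sqrt L * Real.sqrt I := by
        rw [hkey] at this
        linarith
      nlinarith [hA_le, hA0, hsL, hsI, mul_pos hsLpos hsIpos]
  -- key numeric bound
  have ht₂pos : 0 < t₂ := lt_trans ht₁ h12
  have ht₂le : t₂ ≤ t₁ + 1 := by linarith
  have hnum : β * t₂ ^ 3 * L ^ 2 ≤ t₁ ^ 3 := by
    have h1 : t₂ ^ 3 ≤ (t₁ + 1) ^ 3 := pow_le_pow_left₀ ht₂pos.le ht₂le 3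
    have h2 : β * (t₁ + 1) ^ 3 * L ^ 2 ≤ β * (t₁ + 1) ^ 3 * c :=
      mul_le_mul_of_nonneg_left hLc (by positivity)
    have h3 : β * (t₁ + 1) ^ 3 * c = t₁ ^ 3 := by
      rw [hc_def]; field_simp
    calc β * t₂ ^ 3 * L ^ 2 ≤ β * (t₁ + 1) ^ 3 * L ^ 2 :=
          mul_le_mul_of_nonneg_right (mul_le_mul_of_nonneg_left h1 hβ.le) (sq_nonneg L)
    _ ≤ β * (t₁ + 1) ^ 3 * c := h2
    _ = t₁ ^ 3 := h3
  -- pointwise comparison of integrands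
  set K : ℝ := β * t₂ ^ 3 * L * I with hK_def
  clear_value K
  have hpt : ∀ t ∈ Icc t₁ t₂,
      t₁ ^ 3 * (h' t) ^ 2 - K ≤ t ^ 3 * ((h' t) ^ 2 - β * (h t) ^ 2) := by
    intro t ht
    have ht1 : t₁ ≤ t := ht.1
    have ht2 : t ≤ t₂ := ht.2
    have htpos : 0 < t := lt_of_lt_of_le ht₁ ht1
    have hb1 : t₁ ^ 3 * (h' t) ^ 2 ≤ t ^ 3 * (h' t) ^ 2 :=
      mul_le_mul_of_nonneg_right (pow_le_pow_left₀ ht₁.le ht1 3) (sq_nonneg _)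
    have hsqbd : (h t) ^ 2 ≤ L * I := by
      calc (h t) ^ 2 = |h t| ^ 2 := (sq_abs _).symm
      _ ≤ A ^ 2 := pow_le_pow_left₀ (abs_nonneg _) (hhA t ht) 2
      _ ≤ L * I := hA2
    have hb2 : t ^ 3 * (β * (h t) ^ 2) ≤ K := by
      rw [hK_def]
      have h1 : t ^ 3 ≤ t₂ ^ 3 := pow_le_pow_left₀ htpos.le ht2 3
      have h2 : β * (h t) ^ 2 ≤ β * (L * I) := mul_le_mul_of_nonneg_left hsqbd hβ.le
      calc t ^ 3 * (β * (h t) ^ 2) ≤ t ^ 3 * (β * (L * I)) :=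
            mul_le_mul_of_nonneg_left h2 (pow_nonneg htpos.le 3)
      _ ≤ t₂ ^ 3 * (β * (L * I)) :=
            mul_le_mul_of_nonneg_right h1
              (mul_nonneg hβ.le (mul_nonneg hL.le hI0))
      _ = β * t₂ ^ 3 * L * I := by ring
    have hexp : t ^ 3 * ((h' t) ^ 2 - β * (h t) ^ 2)
        = t ^ 3 * (h' t) ^ 2 - t ^ 3 * (β * (h t) ^ 2) := by ring
    rw [hexp]
    linarith
  -- integrate the comparison
  have hf_int : IntervalIntegrable (fun t => t ^ 3 * ((h' t) ^ 2 - β * (h t) ^ 2))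
      MeasureTheory.volume t₁ t₂ := by
    apply ContinuousOn.intervalIntegrable_of_Icc hle
    exact (continuousOn_pow 3).mul ((hcont'.pow 2).sub ((hch.pow 2).const_smul β))
  have hg_int : IntervalIntegrable (fun t => t₁ ^ 3 * (h' t) ^ 2 - K)
      MeasureTheory.volume t₁ t₂ := ((hsq.const_mul _).sub intervalIntegrable_const)
  have hmono := intervalIntegral.integral_mono_on hle hg_int hf_int hpt
  have hlhs : ∫ t in t₁..t₂, (t₁ ^ 3 * (h' t) ^ 2 - K)
      = t₁ ^ 3 * I - K * L := by
    rw [intervalIntegral.integral_sub (hsq.const_mul _) intervalIntegrable_const,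
      intervalIntegral.integral_const_mul, intervalIntegral.integral_const]
    rw [hI_def, hL_def]; simp only [smul_eq_mul]; ring
  have hfinal : 0 ≤ t₁ ^ 3 * I - K * L := by
    rw [hK_def]
    have he : β * t₂ ^ 3 * L * I * L = β * t₂ ^ 3 * L ^ 2 * I := by ring
    rw [he, sub_nonneg]
    exact mul_le_mul_of_nonneg_right hnum hI0
  calc (0:ℝ) ≤ t₁ ^ 3 * I - K * L := hfinal
  _ = ∫ t in t₁..t₂, (t₁ ^ 3 * (h' t) ^ 2 - K) := hlhs.symm
  _ ≤ _ := hmono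
end
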